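/- arXiv:math/0504046 — 4 statements merged into one kernel-verified Lean document; each statement's English description precedes it below -/
import Mathlib

section
/- A linear functional l on a Riesz space X is the sum of two Riesz homomorphisms if and only if l is a positive functional whose kernel is a Grothendieck subspace of X. -/
set_option linter.unusedSectionVars false


variable {X : Type*} [Lattice X] [AddCommGroup X]
  [CovariantClass X X (· + ·) (· ≤ ·)] [Module ℝ X] [PosSMulMono ℝ X]

/-- A Grothendieck subspace: closed under `x ⊔ y ⊔ 0 + x ⊓ y ⊓ 0`. -/
def IsGrothendieckSubspace (H : Submodule ℝ X) : Prop :=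
  ∀ x ∈ H, ∀ y ∈ H, x ⊔ y ⊔ 0 + x ⊓ y ⊓ 0 ∈ H

/-- A Riesz subspace: closed under the lattice operations. -/
def IsRieszSubspace (H : Submodule ℝ X) : Prop :=
  ∀ x ∈ H, ∀ y ∈ H, x ⊔ y ∈ H ∧ x ⊓ y ∈ H

/-- A Riesz homomorphism: a linear map preserving finite suprema. -/
def IsRieszHom (f : X →ₗ[ℝ] ℝ) : Prop :=
  ∀ x y : X, f (x ⊔ y) = f x ⊔ f y

/-- A positive linear functional. -/
def IsPositive (f : X →ₗ[ℝ] ℝ) : Prop :=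
  ∀ x : X, 0 ≤ x → 0 ≤ f x

/-- `p` is the positive part of the order bounded functional `l`
(so `l₋ = p - l` and `|l| = p + (p - l)`). -/
def IsPosPartOf (l p : X →ₗ[ℝ] ℝ) : Prop :=
  IsPositive p ∧ IsPositive (p - l) ∧
    ∀ x : X, 0 ≤ x → p x = sSup {r : ℝ | ∃ y : X, 0 ≤ y ∧ y ≤ x ∧ l y = r}

namespace SumTwoRH

/-! ### Generic lattice-module lemmas -/

private lemma smul_sup_pos {t : ℝ} (ht : 0 < t) (a b : X) :
    t • (a ⊔ b) = t • a ⊔ t • b := by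
  refine le_antisymm ?_ (sup_le (smul_le_smul_of_nonneg_left le_sup_left ht.le)
    (smul_le_smul_of_nonneg_left le_sup_right ht.le))
  have h : a ⊔ b ≤ t⁻¹ • (t • a ⊔ t • b) := by
    refine sup_le ?_ ?_
    · have := smul_le_smul_of_nonneg_left (le_sup_left : t • a ≤ t • a ⊔ t • b)
        (inv_nonneg.2 ht.le)
      rwa [inv_smul_smul₀ ht.ne'] at this
    · have := smul_le_smul_of_nonneg_left (le_sup_right : t • b ≤ t • a ⊔ t • b)
        (inv_nonneg.2 ht.le)
      rwa [inv_smul_smul₀ ht.ne'] at this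
  have := smul_le_smul_of_nonneg_left h ht.le
  rwa [smul_inv_smul₀ ht.ne'] at this

private lemma smul_inf_pos {t : ℝ} (ht : 0 < t) (a b : X) :
    t • (a ⊓ b) = t • a ⊓ t • b := by
  have h : a ⊓ b = -(-a ⊔ -b) := by rw [neg_sup, neg_neg, neg_neg]
  rw [h, smul_neg, smul_sup_pos ht, neg_sup, smul_neg, smul_neg, neg_neg, neg_neg]

private lemma smul_posPart {t : ℝ} (ht : 0 ≤ t) (a : X) : (t • a)⁺ = t • a⁺ := by
  rcases ht.lt_or_eq with h | h
  · rw [posPart_def, posPart_def, smul_sup_pos h a 0, smul_zero]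
  · simp [← h]

private lemma smul_le_smul_right' {s t : ℝ} (h : s ≤ t) {a : X} (ha : 0 ≤ a) :
    s • a ≤ t • a := by
  have : 0 ≤ (t - s) • a := smul_nonneg (by linarith) ha
  have := add_le_add_right this (s • a)
  rwa [add_zero, ← add_smul, add_sub_cancel] at this

private lemma smul_disj {s t : ℝ} (hs : 0 < s) (ht : 0 < t) {a b : X}
    (ha : 0 ≤ a) (hb : 0 ≤ b) (hab : a ⊓ b = 0) : (s • a) ⊓ (t • b) = 0 := by
  set m := max s t with hm
  have hm0 : 0 < m := lt_max_of_lt_left hs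
  refine le_antisymm ?_ (le_inf (smul_nonneg hs.le ha) (smul_nonneg ht.le hb))
  calc (s • a) ⊓ (t • b) ≤ (m • a) ⊓ (m • b) :=
        inf_le_inf (smul_le_smul_right' (le_max_left s t) ha)
          (smul_le_smul_right' (le_max_right s t) hb)
    _ = m • (a ⊓ b) := (smul_inf_pos hm0 a b).symm
    _ = 0 := by rw [hab, smul_zero]

private lemma sup_zero_eq (x y : X) : x ⊔ y ⊔ 0 = x⁺ ⊔ y⁺ := by
  rw [posPart_def, posPart_def, sup_sup_sup_comm, sup_idem]

private lemma inf_zero_eq (x y : X) : x ⊓ y ⊓ 0 = -(x⁻ ⊔ y⁻) := by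
  rw [neg_sup, negPart_def, negPart_def, neg_sup, neg_sup, neg_neg, neg_neg, neg_zero,
    inf_inf_inf_comm, inf_idem]

private lemma sup_posPart_eq (x y : X) : (x ⊔ y)⁺ = x⁺ ⊔ y⁺ := by
  rw [posPart_def, ← sup_zero_eq]

private lemma sup_negPart_eq (x y : X) : (x ⊔ y)⁻ = x⁻ ⊓ y⁻ := by
  letI := AddCommGroup.toDistribLattice X
  rw [negPart_def, neg_sup, negPart_def, negPart_def]
  exact sup_inf_right _ _ _

private lemma sub_sup_zero (x y : X) : (x - y) ⊔ 0 = (x ⊔ y) - y := by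
  rw [sub_eq_add_neg (x ⊔ y) y, sup_add, ← sub_eq_add_neg, ← sub_eq_add_neg, sub_self]

private lemma sub_posPart (x y : X) : (x - y)⁺ = (x ⊔ y) - y := by
  rw [posPart_def, sub_sup_zero]

private lemma sub_posPart_of_disj {a b : X} (hab : a ⊓ b = 0) : (a - b)⁺ = a := by
  have h : a ⊔ b = a + b := by
    have := inf_add_sup a b
    rw [hab, zero_add] at this
    exact this
  rw [sub_posPart, h, add_sub_cancel_right]

/-! ### The functional `nu x = l x⁺` -/

private noncomputable def nu (l : X →ₗ[ℝ] ℝ) (x : X) : ℝ := l (x⁺)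

variable {l : X →ₗ[ℝ] ℝ}

private lemma lmono (hl : IsPositive l) {a b : X} (h : a ≤ b) : l a ≤ l b := by
  have := hl (b - a) (sub_nonneg.2 h)
  rw [map_sub] at this
  linarith

private lemma lnegPart (x : X) : l (x⁻) = l (x⁺) - l x := by
  have := congrArg l (posPart_sub_negPart x)
  rw [map_sub] at this
  linarith

private lemma nu_nonneg (hl : IsPositive l) (x : X) : 0 ≤ nu l x :=
  hl _ (posPart_nonneg x)

private lemma nu_zero : nu l 0 = 0 := by simp [nu]

private lemma nu_neg_eq (x : X) : nu l (-x) = nu l x - l x := by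
  rw [nu, nu, posPart_neg, lnegPart]

private lemma nu_neg {x : X} (hx : l x = 0) : nu l (-x) = nu l x := by
  rw [nu_neg_eq, hx, sub_zero]

private lemma nu_smul {t : ℝ} (ht : 0 ≤ t) (x : X) : nu l (t • x) = t * nu l x := by
  rw [nu, nu, smul_posPart ht, map_smul, smul_eq_mul]

private lemma nu_add_le (hl : IsPositive l) (x y : X) :
    nu l (x + y) ≤ nu l x + nu l y := by
  have h : (x + y)⁺ ≤ x⁺ + y⁺ := by
    rw [posPart_def]
    exact sup_le (add_le_add (le_posPart x) (le_posPart y))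
      (add_nonneg (posPart_nonneg x) (posPart_nonneg y))
  have := lmono hl h
  rw [map_add] at this
  exact this

private lemma nu_of_nonneg {x : X} (hx : 0 ≤ x) : nu l x = l x := by
  rw [nu, posPart_eq_self.2 hx]

private lemma nu_mono (hl : IsPositive l) {a b : X} (h : a ≤ b) : nu l a ≤ nu l b :=
  lmono hl (posPart_mono h)

private lemma nu_squeeze (hl : IsPositive l) {x : X} (hx : l x = 0)
    (hx0 : nu l x = 0) (y : X) : nu l (x + y) = nu l y := by
  have h1 : nu l (x + y) ≤ nu l y := by
    have := nu_add_le hl x y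
    rw [hx0] at this
    linarith
  have h2 : nu l y ≤ nu l (x + y) := by
    have h := nu_add_le hl (x + y) (-x)
    have harg : x + y + -x = y := by abel
    rw [harg, nu_neg hx, hx0] at h
    linarith
  linarith

/-! ### Consequences of the Grothendieck property of the kernel -/

private lemma gro_sup (hG : IsGrothendieckSubspace (LinearMap.ker l)) {x y : X}
    (hx : l x = 0) (hy : l y = 0) : l (x⁺ ⊔ y⁺) = l (x⁻ ⊔ y⁻) := by
  have h := hG x (LinearMap.mem_ker.2 hx) y (LinearMap.mem_ker.2 hy)
  rw [LinearMap.mem_ker, map_add, sup_zero_eq, inf_zero_eq, map_neg] at h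
  linarith

private lemma gro_inf (hG : IsGrothendieckSubspace (LinearMap.ker l)) {x y : X}
    (hx : l x = 0) (hy : l y = 0) : l (x⁺ ⊓ y⁺) = l (x⁻ ⊓ y⁻) := by
  have h1 := gro_sup hG hx hy
  have h2 : l (x⁺ ⊓ y⁺) + l (x⁺ ⊔ y⁺) = l (x⁺) + l (y⁺) := by
    rw [← map_add, ← map_add, inf_add_sup]
  have h3 : l (x⁻ ⊓ y⁻) + l (x⁻ ⊔ y⁻) = l (x⁻) + l (y⁻) := by
    rw [← map_add, ← map_add, inf_add_sup]
  have h4 : l (x⁻) = l (x⁺) := by rw [lnegPart, hx, sub_zero]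
  have h5 : l (y⁻) = l (y⁺) := by rw [lnegPart, hy, sub_zero]
  linarith

private lemma gro_mixed (hG : IsGrothendieckSubspace (LinearMap.ker l)) {x y : X}
    (hx : l x = 0) (hy : l y = 0) : l (x⁺ ⊓ y⁻) = l (x⁻ ⊓ y⁺) := by
  have hy' : l (-y) = 0 := by rw [map_neg, hy, neg_zero]
  have := gro_inf hG hx hy'
  rwa [posPart_neg, negPart_neg] at this

private lemma nu_sub_formula (hG : IsGrothendieckSubspace (LinearMap.ker l)) {x y : X}
    (hx : l x = 0) (hy : l y = 0) :
    nu l (x - y) = nu l x + nu l y - 2 * l (x⁺ ⊓ y⁺) := by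
  have h1 : nu l (x - y) = l (x ⊔ y) := by
    rw [nu, sub_posPart, map_sub, hy, sub_zero]
  have h2 : x ⊔ y = (x ⊔ y)⁺ - (x ⊔ y)⁻ := (posPart_sub_negPart _).symm
  have h3 : l (x ⊔ y) = l (x⁺ ⊔ y⁺) - l (x⁻ ⊓ y⁻) := by
    rw [h2, map_sub, sup_posPart_eq, sup_negPart_eq]
  have h4 : l (x⁺ ⊓ y⁺) + l (x⁺ ⊔ y⁺) = l (x⁺) + l (y⁺) := by
    rw [← map_add, ← map_add, inf_add_sup]
  have h5 : l (x⁻ ⊓ y⁻) = l (x⁺ ⊓ y⁺) := (gro_inf hG hx hy).symm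
  rw [h1, h3, h5]
  rw [nu, nu]
  linarith

private lemma nu_add_formula (hG : IsGrothendieckSubspace (LinearMap.ker l)) {x y : X}
    (hx : l x = 0) (hy : l y = 0) :
    nu l (x + y) = nu l x + nu l y - 2 * l (x⁺ ⊓ y⁻) := by
  have hy' : l (-y) = 0 := by rw [map_neg, hy, neg_zero]
  have := nu_sub_formula hG hx hy'
  rw [sub_neg_eq_add, nu_neg hy, posPart_neg] at this
  exact this

private lemma two_disjoint (hl : IsPositive l) (hG : IsGrothendieckSubspace (LinearMap.ker l))
    {a b c : X} (ha : 0 ≤ a) (hb : 0 ≤ b) (hc : 0 ≤ c)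
    (hab : a ⊓ b = 0) (hac : a ⊓ c = 0) (hbc : b ⊓ c = 0) :
    l a = 0 ∨ l b = 0 ∨ l c = 0 := by
  by_contra h
  push_neg at h
  obtain ⟨ha', hb', hc'⟩ := h
  have hla : 0 < l a := (hl a ha).lt_of_ne (Ne.symm ha')
  have hlb : 0 < l b := (hl b hb).lt_of_ne (Ne.symm hb')
  have hlc : 0 < l c := (hl c hc).lt_of_ne (Ne.symm hc')
  set x := (l a)⁻¹ • a with hxdef
  set y := (l b)⁻¹ • b with hydef
  set z := (l c)⁻¹ • c with hzdef
  have hlx : l x = 1 := by rw [hxdef, map_smul, smul_eq_mul, inv_mul_cancel₀ hla.ne']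
  have hly : l y = 1 := by rw [hydef, map_smul, smul_eq_mul, inv_mul_cancel₀ hlb.ne']
  have hxy : x ⊓ y = 0 := smul_disj (inv_pos.2 hla) (inv_pos.2 hlb) ha hb hab
  have hxz : x ⊓ z = 0 := smul_disj (inv_pos.2 hla) (inv_pos.2 hlc) ha hc hac
  have hyz : y ⊓ z = 0 := smul_disj (inv_pos.2 hlb) (inv_pos.2 hlc) hb hc hbc
  have hu : l (x - y) = 0 := by rw [map_sub, hlx, hly, sub_self]
  have hv : l (y - z) = 0 := by rw [map_sub, hly]; simp [hzdef, map_smul, smul_eq_mul,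
    inv_mul_cancel₀ hlc.ne']
  have hup : (x - y)⁺ = x := sub_posPart_of_disj hxy
  have hum : (x - y)⁻ = y := by
    rw [negPart_def, neg_sub, ← posPart_def, sub_posPart_of_disj (inf_comm x y ▸ hxy)]
  have hvp : (y - z)⁺ = y := sub_posPart_of_disj hyz
  have hvm : (y - z)⁻ = z := by
    rw [negPart_def, neg_sub, ← posPart_def, sub_posPart_of_disj (inf_comm y z ▸ hyz)]
  have := gro_mixed hG hu hv
  rw [hup, hum, hvp, hvm, hxz, inf_idem, hly, map_zero] at this
  exact one_ne_zero this.symm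

private lemma dichotomy (hl : IsPositive l) (hG : IsGrothendieckSubspace (LinearMap.ker l))
    {x y : X} (hx : l x = 0) (hy : l y = 0) :
    l (x⁺ ⊓ y⁺) = 0 ∨ l (x⁺ ⊓ y⁻) = 0 := by
  have hA : (0:X) ≤ x⁺ ⊓ y⁺ := le_inf (posPart_nonneg x) (posPart_nonneg y)
  have hB : (0:X) ≤ x⁺ ⊓ y⁻ := le_inf (posPart_nonneg x) (negPart_nonneg y)
  have hC : (0:X) ≤ x⁻ ⊓ y⁺ := le_inf (negPart_nonneg x) (posPart_nonneg y)
  have hAB : (x⁺ ⊓ y⁺) ⊓ (x⁺ ⊓ y⁻) = 0 := by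
    refine le_antisymm ?_ (le_inf hA hB)
    calc (x⁺ ⊓ y⁺) ⊓ (x⁺ ⊓ y⁻) ≤ y⁺ ⊓ y⁻ :=
          inf_le_inf inf_le_right inf_le_right
      _ = 0 := posPart_inf_negPart_eq_zero y
  have hAC : (x⁺ ⊓ y⁺) ⊓ (x⁻ ⊓ y⁺) = 0 := by
    refine le_antisymm ?_ (le_inf hA hC)
    calc (x⁺ ⊓ y⁺) ⊓ (x⁻ ⊓ y⁺) ≤ x⁺ ⊓ x⁻ :=
          inf_le_inf inf_le_left inf_le_left
      _ = 0 := posPart_inf_negPart_eq_zero x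
  have hBC : (x⁺ ⊓ y⁻) ⊓ (x⁻ ⊓ y⁺) = 0 := by
    refine le_antisymm ?_ (le_inf hB hC)
    calc (x⁺ ⊓ y⁻) ⊓ (x⁻ ⊓ y⁺) ≤ x⁺ ⊓ x⁻ :=
          inf_le_inf inf_le_left inf_le_left
      _ = 0 := posPart_inf_negPart_eq_zero x
  rcases two_disjoint hl hG hA hB hC hAB hAC hBC with h | h | h
  · exact Or.inl h
  · exact Or.inr h
  · exact Or.inr (by rw [gro_mixed hG hx hy]; exact h)

private lemma nu_dichotomy (hl : IsPositive l) (hG : IsGrothendieckSubspace (LinearMap.ker l))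
    {x y : X} (hx : l x = 0) (hy : l y = 0) :
    nu l (x + y) = nu l x + nu l y ∨ nu l (x - y) = nu l x + nu l y := by
  rcases dichotomy hl hG hx hy with h | h
  · right; rw [nu_sub_formula hG hx hy, h]; ring
  · left; rw [nu_add_formula hG hx hy, h]; ring

/-! ### Alignment -/

private lemma al_abs (hl : IsPositive l) (hG : IsGrothendieckSubspace (LinearMap.ker l))
    {x y : X} (hx : l x = 0) (hy : l y = 0)
    (h : nu l (x + y) = nu l x + nu l y) :
    nu l (x - y) = |nu l x - nu l y| := by
  have hxy : l (x + y) = 0 := by rw [map_add, hx, hy, add_zero]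
  have hxy' : l (x - y) = 0 := by rw [map_sub, hx, hy, sub_zero]
  rcases nu_dichotomy hl hG hxy hxy' with h1 | h1
  · have harg : x + y + (x - y) = (2:ℝ) • x := by
      rw [two_smul]; abel
    rw [harg, nu_smul (by norm_num : (0:ℝ) ≤ 2)] at h1
    rw [h] at h1
    have h2 : nu l (x - y) = nu l x - nu l y := by linarith
    rw [h2, abs_of_nonneg]
    rw [← h2]; exact nu_nonneg hl _
  · have harg : x + y - (x - y) = (2:ℝ) • y := by
      rw [two_smul]; abel
    rw [harg, nu_smul (by norm_num : (0:ℝ) ≤ 2)] at h1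
    rw [h] at h1
    have h2 : nu l (x - y) = nu l y - nu l x := by linarith
    rw [h2, abs_sub_comm, abs_of_nonneg]
    rw [← h2]; exact nu_nonneg hl _

private lemma abs_sub_lt_add {p q : ℝ} (hp : 0 < p) (hq : 0 < q) : |p - q| < p + q :=
  abs_lt.2 ⟨by linarith, by linarith⟩

private lemma al_trans (hl : IsPositive l) (hG : IsGrothendieckSubspace (LinearMap.ker l))
    {x y z : X} (hx : l x = 0) (hy : l y = 0) (hz : l z = 0)
    (hνy : 0 < nu l y) (hνz : 0 < nu l z)
    (hxy : nu l (x + y) = nu l x + nu l y) (hyz : nu l (y + z) = nu l y + nu l z) :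
    nu l (x + z) = nu l x + nu l z := by
  have hxyK : l (x + y) = 0 := by rw [map_add, hx, hy, add_zero]
  rcases nu_dichotomy hl hG hxyK hz with h1 | h1
  · have harg : x + y + z = x + z + y := by abel
    rw [harg, hxy] at h1
    have h2 : nu l (x + z + y) ≤ nu l (x + z) + nu l y := nu_add_le hl _ _
    have h3 : nu l (x + z) ≤ nu l x + nu l z := nu_add_le hl _ _
    linarith
  · have harg : x + y - z = x + (y - z) := by abel
    rw [harg, hxy] at h1
    have h2 : nu l (x + (y - z)) ≤ nu l x + nu l (y - z) := nu_add_le hl _ _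
    have h3 : nu l (y - z) = |nu l y - nu l z| := al_abs hl hG hy hz hyz
    have h4 : |nu l y - nu l z| < nu l y + nu l z := abs_sub_lt_add hνy hνz
    linarith

/-! ### The sign functional `mu` -/

private noncomputable def mu (l : X →ₗ[ℝ] ℝ) (u₀ x : X) : ℝ :=
  if nu l (x + u₀) = nu l x + nu l u₀ then nu l x else -nu l x

variable {u₀ : X}

private lemma mu_cases (x : X) : mu l u₀ x = nu l x ∨ mu l u₀ x = -nu l x := by
  unfold mu; split <;> simp

private lemma mu_le_nu (hl : IsPositive l) (x : X) : mu l u₀ x ≤ nu l x := by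
  rcases mu_cases (l := l) (u₀ := u₀) x with h | h
  · rw [h]
  · rw [h]; linarith [nu_nonneg hl x]

private lemma mu_of_zero {x : X} (hx0 : nu l x = 0) : mu l u₀ x = 0 := by
  rcases mu_cases (l := l) (u₀ := u₀) x with h | h <;> rw [h, hx0]; ring

private lemma mu_pos_al (hl : IsPositive l) {x : X} (h : 0 < mu l u₀ x) :
    nu l (x + u₀) = nu l x + nu l u₀ ∧ mu l u₀ x = nu l x := by
  by_cases hal : nu l (x + u₀) = nu l x + nu l u₀
  · exact ⟨hal, by unfold mu; rw [if_pos hal]⟩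
  · exfalso
    have : mu l u₀ x = -nu l x := by unfold mu; rw [if_neg hal]
    rw [this] at h
    linarith [nu_nonneg hl x]

private lemma al_of_not_al (hl : IsPositive l) (hG : IsGrothendieckSubspace (LinearMap.ker l))
    (hu : l u₀ = 0) {x : X} (hx : l x = 0)
    (h : ¬ nu l (x + u₀) = nu l x + nu l u₀) :
    nu l (-x + u₀) = nu l (-x) + nu l u₀ := by
  rcases nu_dichotomy hl hG hx hu with h1 | h1
  · exact absurd h1 h
  · have hxu : l (x - u₀) = 0 := by rw [map_sub, hx, hu, sub_zero]
    have : nu l (-x + u₀) = nu l (x - u₀) := by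
      rw [show -x + u₀ = -(x - u₀) by abel, nu_neg hxu]
    rw [this, h1, nu_neg hx]

private lemma not_al_neg (hl : IsPositive l) (hG : IsGrothendieckSubspace (LinearMap.ker l))
    (hu : l u₀ = 0) (hνu : 0 < nu l u₀) {x : X} (hx : l x = 0) (hνx : 0 < nu l x)
    (h : nu l (x + u₀) = nu l x + nu l u₀) :
    ¬ nu l (-x + u₀) = nu l (-x) + nu l u₀ := by
  intro hcon
  have hxu : l (x - u₀) = 0 := by rw [map_sub, hx, hu, sub_zero]
  have h1 : nu l (-x + u₀) = nu l (x - u₀) := by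
    rw [show -x + u₀ = -(x - u₀) by abel, nu_neg hxu]
  have h2 : nu l (x - u₀) = |nu l x - nu l u₀| := al_abs hl hG hx hu h
  rw [h1, h2, nu_neg hx] at hcon
  have := abs_sub_lt_add hνx hνu
  linarith

private lemma mu_neg (hl : IsPositive l) (hG : IsGrothendieckSubspace (LinearMap.ker l))
    (hu : l u₀ = 0) (hνu : 0 < nu l u₀) {x : X} (hx : l x = 0) :
    mu l u₀ (-x) = -mu l u₀ x := by
  rcases eq_or_lt_of_le (nu_nonneg hl x) with h0 | h0
  · rw [mu_of_zero (by rw [nu_neg hx, ← h0]), mu_of_zero h0.symm]; ring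
  · by_cases hal : nu l (x + u₀) = nu l x + nu l u₀
    · have h1 := not_al_neg hl hG hu hνu hx h0 hal
      unfold mu
      rw [if_neg h1, if_pos hal, nu_neg hx]
    · have h1 := al_of_not_al hl hG hu hx hal
      unfold mu
      rw [if_pos h1, if_neg hal, nu_neg hx, neg_neg]

section MuAdd

variable (hl : IsPositive l) (hG : IsGrothendieckSubspace (LinearMap.ker l))
  (hu : l u₀ = 0) (hνu : 0 < nu l u₀)

include hl hG hu hνu

/-- auxiliary: adding with a `nu`-null element. -/
private lemma mu_add_null {x y : X} (hx : l x = 0) (hy : l y = 0) (hx0 : nu l x = 0) :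
    mu l u₀ (x + y) = mu l u₀ x + mu l u₀ y := by
  rw [mu_of_zero hx0, zero_add]
  have hsum : nu l (x + y) = nu l y := nu_squeeze hl hx hx0 y
  rcases eq_or_lt_of_le (nu_nonneg hl y) with h0 | h0
  · rw [mu_of_zero (by rw [hsum, ← h0]), mu_of_zero h0.symm]
  · by_cases hal : nu l (y + u₀) = nu l y + nu l u₀
    · have h1 : nu l (x + y + u₀) = nu l (x + y) + nu l u₀ := by
        have := nu_squeeze hl hx hx0 (y + u₀)
        rw [show x + (y + u₀) = x + y + u₀ by abel] at this
        rw [this, hal, hsum]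
      unfold mu
      rw [if_pos h1, if_pos hal, hsum]
    · have h1 : ¬ nu l (x + y + u₀) = nu l (x + y) + nu l u₀ := by
        intro hcon
        have := nu_squeeze hl hx hx0 (y + u₀)
        rw [show x + (y + u₀) = x + y + u₀ by abel] at this
        rw [this, hsum] at hcon
        exact hal hcon
      unfold mu
      rw [if_neg h1, if_neg hal, hsum]

/-- auxiliary: both aligned with `u₀`. -/
private lemma mu_add_both {x y : X} (hx : l x = 0) (hy : l y = 0)
    (hνx : 0 < nu l x) (hνy : 0 < nu l y)
    (hax : nu l (x + u₀) = nu l x + nu l u₀) (hay : nu l (y + u₀) = nu l y + nu l u₀) :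
    nu l (x + y + u₀) = nu l (x + y) + nu l u₀ ∧ nu l (x + y) = nu l x + nu l y := by
  have hau : l (-u₀) = 0 := by rw [map_neg, hu, neg_zero]
  have hxy : nu l (x + y) = nu l x + nu l y := by
    have h1 : nu l (u₀ + y) = nu l u₀ + nu l y := by rw [add_comm u₀ y, hay]; ring
    exact al_trans hl hG hx hu hy hνu hνy hax h1
  refine ⟨?_, hxy⟩
  have hxyK : l (x + y) = 0 := by rw [map_add, hx, hy, add_zero]
  -- x + y is aligned with x
  have hal1 : nu l (x + y + x) = nu l (x + y) + nu l x := by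
    have hle : nu l (x + y + x) ≤ nu l (x + y) + nu l x := nu_add_le hl _ _
    have h2 : nu l (x + y + (x + y)) = 2 * nu l (x + y) := by
      rw [show x + y + (x + y) = (2:ℝ) • (x + y) by rw [two_smul],
        nu_smul (by norm_num : (0:ℝ) ≤ 2)]
    have h3 : nu l (x + y + (x + y)) ≤ nu l (x + y + x) + nu l y := by
      have := nu_add_le hl (x + y + x) y
      rw [show x + y + x + y = x + y + (x + y) by abel] at this
      exact this
    rw [hxy] at h2 ⊢
    linarith [h2, h3, hle, hxy]
  exact al_trans hl hG hxyK hx hu hνx hνu (by rw [hal1]) hax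

/-- auxiliary: `x` aligned, `y` anti-aligned, with `nu y < nu x`. -/
private lemma mu_add_gt {x y : X} (hx : l x = 0) (hy : l y = 0)
    (hνx : 0 < nu l x) (hνy : 0 < nu l y) (hlt : nu l y < nu l x)
    (hax : nu l (x + u₀) = nu l x + nu l u₀)
    (hay : nu l (-y + u₀) = nu l (-y) + nu l u₀) :
    nu l (x + y + u₀) = nu l (x + y) + nu l u₀ ∧ nu l (x + y) = nu l x - nu l y := by
  have hyK : l (-y) = 0 := by rw [map_neg, hy, neg_zero]
  have hνy' : 0 < nu l (-y) := by rw [nu_neg hy]; exact hνy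
  -- x aligned with -y
  have haxny : nu l (x + -y) = nu l x + nu l (-y) := by
    have h1 : nu l (u₀ + -y) = nu l u₀ + nu l (-y) := by rw [add_comm]; rw [hay]; ring
    exact al_trans hl hG hx hu hyK hνu hνy' hax h1
  have hval : nu l (x + y) = nu l x - nu l y := by
    have := al_abs hl hG hx hyK haxny
    rw [show x - -y = x + y by abel, nu_neg hy] at this
    rw [this, abs_of_pos (by linarith)]
  refine ⟨?_, hval⟩
  have hxyK : l (x + y) = 0 := by rw [map_add, hx, hy, add_zero]
  have hνxy : 0 < nu l (x + y) := by rw [hval]; linarith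
  -- x + y aligned with x
  have hal1 : nu l (x + y + x) = nu l (x + y) + nu l x := by
    have hle : nu l (x + y + x) ≤ nu l (x + y) + nu l x := nu_add_le hl _ _
    have h2 : nu l (x + x) = 2 * nu l x := by
      rw [show x + x = (2:ℝ) • x by rw [two_smul], nu_smul (by norm_num : (0:ℝ) ≤ 2)]
    have h3 : nu l (x + x) ≤ nu l (x + y + x) + nu l y := by
      have := nu_add_le hl (x + y + x) (-y)
      rw [show x + y + x + -y = x + x by abel, nu_neg hy] at this
      exact this
    rw [hval]
    linarith
  exact al_trans hl hG hxyK hx hu hνx hνu (by rw [hal1]) hax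


private lemma mu_add_mixed {x y : X} (hx : l x = 0) (hy : l y = 0)
    (hνx : 0 < nu l x) (hνy : 0 < nu l y)
    (hax : nu l (x + u₀) = nu l x + nu l u₀)
    (hay : ¬ nu l (y + u₀) = nu l y + nu l u₀) :
    mu l u₀ (x + y) = mu l u₀ x + mu l u₀ y := by
  have hyK : l (-y) = 0 := by rw [map_neg, hy, neg_zero]
  have hxK : l (-x) = 0 := by rw [map_neg, hx, neg_zero]
  have hνy' : 0 < nu l (-y) := by rw [nu_neg hy]; exact hνy
  have hνx' : 0 < nu l (-x) := by rw [nu_neg hx]; exact hνx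
  have hay' := al_of_not_al hl hG hu hy hay
  have hmy : mu l u₀ y = -nu l y := by unfold mu; rw [if_neg hay]
  have hmx : mu l u₀ x = nu l x := by unfold mu; rw [if_pos hax]
  rcases lt_trichotomy (nu l y) (nu l x) with hlt | heq | hgt
  · obtain ⟨h1, h2⟩ := mu_add_gt hl hG hu hνu hx hy hνx hνy hlt hax hay'
    have h3 : mu l u₀ (x + y) = nu l (x + y) := by unfold mu; rw [if_pos h1]
    rw [h3, h2, hmx, hmy]; ring
  · -- equal norms: nu (x+y) = 0
    have haxny : nu l (x + -y) = nu l x + nu l (-y) := by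
      have h1 : nu l (u₀ + -y) = nu l u₀ + nu l (-y) := by
        rw [add_comm]; rw [hay']; ring
      exact al_trans hl hG hx hu hyK hνu hνy' hax h1
    have habs := al_abs hl hG hx hyK haxny
    rw [show x - -y = x + y by abel, nu_neg hy] at habs
    have h0 : nu l (x + y) = 0 := by rw [habs, heq, sub_self, abs_zero]
    rw [mu_of_zero h0, hmx, hmy, heq]; ring
  · -- nu x < nu y : use the `gt` lemma on (-y, -x)
    have hax2 : nu l (-(-x) + u₀) = nu l (-(-x)) + nu l u₀ := by
      rw [neg_neg]; exact hax
    have hlt2 : nu l (-x) < nu l (-y) := by rw [nu_neg hx, nu_neg hy]; exact hgt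
    obtain ⟨g1, g2⟩ := mu_add_gt hl hG hu hνu hyK hxK hνy' hνx' hlt2 hay'
      (by rw [neg_neg]; exact hax)
    have hK : l (x + y) = 0 := by rw [map_add, hx, hy, add_zero]
    have hmuneg : mu l u₀ (-(x + y)) = -mu l u₀ (x + y) := mu_neg hl hG hu hνu hK
    have harg : -(x + y) = -y + -x := by abel
    have hval : mu l u₀ (-y + -x) = nu l (-y + -x) := by unfold mu; rw [if_pos g1]
    have h5 : mu l u₀ (x + y) = -(nu l (-y + -x)) := by
      rw [← hval, ← harg, hmuneg]; ring
    rw [h5, g2, nu_neg hy, nu_neg hx, hmx, hmy]; ring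

private lemma mu_add {x y : X} (hx : l x = 0) (hy : l y = 0) :
    mu l u₀ (x + y) = mu l u₀ x + mu l u₀ y := by
  rcases eq_or_lt_of_le (nu_nonneg hl x) with hx0 | hνx
  · exact mu_add_null hl hG hu hνu hx hy hx0.symm
  rcases eq_or_lt_of_le (nu_nonneg hl y) with hy0 | hνy
  · rw [add_comm x y, mu_add_null hl hG hu hνu hy hx hy0.symm]; ring
  by_cases hax : nu l (x + u₀) = nu l x + nu l u₀
  · by_cases hay : nu l (y + u₀) = nu l y + nu l u₀
    · obtain ⟨h1, h2⟩ := mu_add_both hl hG hu hνu hx hy hνx hνy hax hay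
      unfold mu
      rw [if_pos h1, if_pos hax, if_pos hay, h2]
    · exact mu_add_mixed hl hG hu hνu hx hy hνx hνy hax hay
  · by_cases hay : nu l (y + u₀) = nu l y + nu l u₀
    · rw [add_comm x y, mu_add_mixed hl hG hu hνu hy hx hνy hνx hay hax]; ring
    · -- both anti-aligned
      have hxK : l (-x) = 0 := by rw [map_neg, hx, neg_zero]
      have hyK : l (-y) = 0 := by rw [map_neg, hy, neg_zero]
      have hνx' : 0 < nu l (-x) := by rw [nu_neg hx]; exact hνx
      have hνy' : 0 < nu l (-y) := by rw [nu_neg hy]; exact hνy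
      have hax' := al_of_not_al hl hG hu hx hax
      have hay' := al_of_not_al hl hG hu hy hay
      obtain ⟨k1, k2⟩ := mu_add_both hl hG hu hνu hxK hyK hνx' hνy' hax' hay'
      have hK : l (x + y) = 0 := by rw [map_add, hx, hy, add_zero]
      have hmuneg : mu l u₀ (-(x + y)) = -mu l u₀ (x + y) := mu_neg hl hG hu hνu hK
      have harg : -(x + y) = -x + -y := by abel
      have hval : mu l u₀ (-x + -y) = nu l (-x + -y) := by unfold mu; rw [if_pos k1]
      have h5 : mu l u₀ (x + y) = -(nu l (-x + -y)) := by
        rw [← hval, ← harg, hmuneg]; ring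
      have hmx : mu l u₀ x = -nu l x := by unfold mu; rw [if_neg hax]
      have hmy : mu l u₀ y = -nu l y := by unfold mu; rw [if_neg hay]
      rw [h5, k2, nu_neg hx, nu_neg hy, hmx, hmy]; ring

private lemma mu_smul_pos {t : ℝ} (ht : 0 < t) {x : X} (hx : l x = 0) :
    mu l u₀ (t • x) = t * mu l u₀ x := by
  have htx : l (t • x) = 0 := by rw [map_smul, hx, smul_zero]
  rcases eq_or_lt_of_le (nu_nonneg hl x) with hx0 | hνx
  · rw [mu_of_zero (by rw [nu_smul ht.le, ← hx0, mul_zero]), mu_of_zero hx0.symm]; ring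
  · have hνtx : 0 < nu l (t • x) := by
      rw [nu_smul ht.le]; positivity
    have haltx : nu l (t • x + x) = nu l (t • x) + nu l x := by
      rw [show t • x + x = (t + 1) • x by rw [add_smul, one_smul],
        nu_smul (by linarith : (0:ℝ) ≤ t + 1), nu_smul ht.le]
      ring
    by_cases hax : nu l (x + u₀) = nu l x + nu l u₀
    · have h1 : nu l (t • x + u₀) = nu l (t • x) + nu l u₀ :=
        al_trans hl hG htx hx hu hνx hνu haltx hax
      unfold mu
      rw [if_pos h1, if_pos hax, nu_smul ht.le]
    · have h1 : ¬ nu l (t • x + u₀) = nu l (t • x) + nu l u₀ := by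
        intro hcon
        apply hax
        have halxt : nu l (x + t • x) = nu l x + nu l (t • x) := by
          rw [add_comm x (t • x), haltx]; ring
        exact al_trans hl hG hx htx hu hνtx hνu halxt hcon
      unfold mu
      rw [if_neg h1, if_neg hax, nu_smul ht.le]; ring

private lemma mu_smul (t : ℝ) {x : X} (hx : l x = 0) :
    mu l u₀ (t • x) = t * mu l u₀ x := by
  rcases lt_trichotomy t 0 with ht | ht | ht
  · have hxK : l (-x) = 0 := by rw [map_neg, hx, neg_zero]
    have harg : t • x = (-t) • (-x) := by rw [smul_neg, neg_smul, neg_neg]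
    rw [harg, mu_smul_pos hl hG hu hνu (by linarith : (0:ℝ) < -t) hxK,
      mu_neg hl hG hu hνu hx]
    ring
  · rw [ht, zero_smul, mu_of_zero nu_zero]; ring
  · exact mu_smul_pos hl hG hu hνu ht hx

end MuAdd

/-! ### Assembling the Riesz homomorphism -/

private lemma rieszHom_of_posPart (f : X →ₗ[ℝ] ℝ) (h : ∀ z, f (z⁺) = f z ⊔ 0) :
    IsRieszHom f := by
  intro x y
  have key : x ⊔ y = x + (y - x)⁺ := by
    rw [posPart_def, sub_sup_zero, sup_comm y x]; abel
  have key2 : f x ⊔ f y = f x + ((f y - f x) ⊔ 0) := by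
    rw [sub_sup_zero (f y) (f x), sup_comm (f y) (f x)]; abel
  rw [key, map_add, h (y - x), map_sub, key2]

private def SS (l : X →ₗ[ℝ] ℝ) (u₀ e : X) : Set ℝ :=
  {t | ∃ k : X, l k = 0 ∧ k ≤ e ∧ mu l u₀ k = t}

private noncomputable def cc (l : X →ₗ[ℝ] ℝ) (u₀ e : X) : ℝ := sSup (SS l u₀ e)

private noncomputable def FF (l : X →ₗ[ℝ] ℝ) (u₀ e : X) : X → ℝ :=
  fun x => mu l u₀ (x - l x • e) + cc l u₀ e * l x

section Assemble

variable (hl : IsPositive l) (hG : IsGrothendieckSubspace (LinearMap.ker l))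
  (hu : l u₀ = 0) (hνu : 0 < nu l u₀) {e : X} (he0 : 0 ≤ e) (he1 : l e = 1)

private lemma karg (e : X) (x : X) (he1 : l e = 1) : l (x - l x • e) = 0 := by
  rw [map_sub, map_smul, he1, smul_eq_mul, mul_one, sub_self]

include hl in
private lemma SS_bdd (he0 : 0 ≤ e) (he1 : l e = 1) : ∀ t ∈ SS l u₀ e, t ≤ 1 := by
  rintro t ⟨k, hk0, hke, rfl⟩
  have h1 : mu l u₀ k ≤ nu l k := mu_le_nu hl k
  have h2 : nu l k ≤ l e := by
    rw [nu]
    exact lmono hl (by rw [posPart_def]; exact sup_le hke he0)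
  rw [he1] at h2
  linarith

private lemma SS_zero (he0 : 0 ≤ e) : (0:ℝ) ∈ SS l u₀ e :=
  ⟨0, map_zero l, he0, mu_of_zero nu_zero⟩

include hl in
private lemma cc_nonneg (he0 : 0 ≤ e) (he1 : l e = 1) : 0 ≤ cc l u₀ e :=
  le_csSup ⟨1, fun t ht => SS_bdd hl he0 he1 t ht⟩ (SS_zero he0)

include hl in
private lemma cc_le_one (he0 : 0 ≤ e) (he1 : l e = 1) : cc l u₀ e ≤ 1 :=
  csSup_le ⟨0, SS_zero he0⟩ (SS_bdd hl he0 he1)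

include hl hG hu hνu he1 in
private lemma FF_add (x y : X) : FF l u₀ e (x + y) = FF l u₀ e x + FF l u₀ e y := by
  have harg : (x + y) - l (x + y) • e = (x - l x • e) + (y - l y • e) := by
    rw [map_add, add_smul]; abel
  unfold FF
  rw [harg, mu_add hl hG hu hνu (karg e x he1) (karg e y he1), map_add]
  ring

include hl hG hu hνu he1 in
private lemma FF_smul (t : ℝ) (x : X) : FF l u₀ e (t • x) = t * FF l u₀ e x := by
  have harg : (t • x) - l (t • x) • e = t • (x - l x • e) := by
    rw [map_smul, smul_eq_mul, mul_smul, smul_sub]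
  unfold FF
  rw [harg, mu_smul hl hG hu hνu t (karg e x he1), map_smul, smul_eq_mul]
  ring

include hl hG hu hνu he0 he1 in
private lemma FF_bounds {y : X} (hy : 0 ≤ y) : 0 ≤ FF l u₀ e y ∧ FF l u₀ e y ≤ l y := by
  have hbdd : BddAbove (SS l u₀ e) := ⟨1, fun t ht => SS_bdd hl he0 he1 t ht⟩
  rcases eq_or_lt_of_le (hl y hy) with ht0 | ht
  · -- l y = 0
    have hyp : nu l y = 0 := by
      rw [nu_of_nonneg hy, ← ht0]
    unfold FF
    rw [← ht0, zero_smul, sub_zero, mu_of_zero hyp, mul_zero, add_zero]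
    exact ⟨le_refl 0, le_refl 0⟩
  · set t := l y with htdef
    have harg : y - t • e = t • (t⁻¹ • y - e) := by
      rw [smul_sub, smul_inv_smul₀ ht.ne']
    have hkin : l (t⁻¹ • y - e) = 0 := by
      rw [map_sub, map_smul, he1, smul_eq_mul, ← htdef, inv_mul_cancel₀ ht.ne', sub_self]
    have hmu : mu l u₀ (y - t • e) = t * mu l u₀ (t⁻¹ • y - e) := by
      rw [harg, mu_smul hl hG hu hνu t hkin]
    constructor
    · -- lower bound
      have hk' : l (e - t⁻¹ • y) = 0 := by
        rw [map_sub, map_smul, he1, smul_eq_mul, ← htdef, inv_mul_cancel₀ ht.ne', sub_self]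
      have hk'le : e - t⁻¹ • y ≤ e := by
        have : 0 ≤ t⁻¹ • y := smul_nonneg (inv_nonneg.2 ht.le) hy
        simpa using this
      have hkS : mu l u₀ (e - t⁻¹ • y) ≤ cc l u₀ e :=
        le_csSup hbdd ⟨e - t⁻¹ • y, hk', hk'le, rfl⟩
      have hneg : mu l u₀ (t⁻¹ • y - e) = -mu l u₀ (e - t⁻¹ • y) := by
        have := mu_neg hl hG hu hνu hk'
        rw [show -(e - t⁻¹ • y) = t⁻¹ • y - e by abel] at this
        rw [this]
      unfold FF
      rw [hmu, hneg, ← htdef]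
      nlinarith [hkS]
    · -- upper bound
      have hub : ∀ s ∈ SS l u₀ e, s ≤ 1 - mu l u₀ (t⁻¹ • y - e) := by
        rintro s ⟨k, hk0, hke, rfl⟩
        have hsum : mu l u₀ k + mu l u₀ (t⁻¹ • y - e) =
            mu l u₀ (k + (t⁻¹ • y - e)) :=
          (mu_add hl hG hu hνu hk0 hkin).symm
        have hb1 : mu l u₀ (k + (t⁻¹ • y - e)) ≤ nu l (k + (t⁻¹ • y - e)) :=
          mu_le_nu hl _
        have hb2 : nu l (k + (t⁻¹ • y - e)) ≤ l (t⁻¹ • y) := by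
          rw [nu]
          refine lmono hl ?_
          rw [posPart_def]
          refine sup_le ?_ (smul_nonneg (inv_nonneg.2 ht.le) hy)
          have : k - e ≤ 0 := sub_nonpos.2 hke
          calc k + (t⁻¹ • y - e) = t⁻¹ • y + (k - e) := by abel
            _ ≤ t⁻¹ • y + 0 := add_le_add_right this _
            _ = t⁻¹ • y := add_zero _
        have hb3 : l (t⁻¹ • y) = 1 := by
          rw [map_smul, smul_eq_mul, ← htdef, inv_mul_cancel₀ ht.ne']
        rw [hb3] at hb2
        linarith
      have hcb : cc l u₀ e ≤ 1 - mu l u₀ (t⁻¹ • y - e) :=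
        csSup_le ⟨0, SS_zero he0⟩ hub
      unfold FF
      rw [hmu, ← htdef]
      nlinarith [hcb]

include hl hG hu hνu he0 he1 in
private lemma FF_disj_norm {a b : X} (ha : 0 ≤ a) (hb : 0 ≤ b) (hab : a ⊓ b = 0)
    (hla : l a = 1) (hlb : l b = 1) : FF l u₀ e a = 0 ∨ FF l u₀ e b = 0 := by
  by_contra hcon
  push_neg at hcon
  obtain ⟨hFa, hFb⟩ := hcon
  have hFa' : 0 < FF l u₀ e a := ((FF_bounds hl hG hu hνu he0 he1 ha).1).lt_of_ne (Ne.symm hFa)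
  have hFb' : 0 < FF l u₀ e b := ((FF_bounds hl hG hu hνu he0 he1 hb).1).lt_of_ne (Ne.symm hFb)
  set ε := min (FF l u₀ e a) (FF l u₀ e b) / 2 with hεdef
  have hε : 0 < ε := by
    rw [hεdef]
    have := lt_min hFa' hFb'
    linarith [lt_min hFa' hFb']
  obtain ⟨s, hsS, hs⟩ := exists_lt_of_lt_csSup (⟨0, SS_zero he0⟩ : (SS l u₀ e).Nonempty)
    (show cc l u₀ e - ε < cc l u₀ e by linarith)
  obtain ⟨k, hk0, hke, rfl⟩ := hsS
  have hs1K : l (k + (a - e)) = 0 := by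
    rw [map_add, map_sub, hk0, hla, he1, sub_self, add_zero]
  have hr1K : l (k + (b - e)) = 0 := by
    rw [map_add, map_sub, hk0, hlb, he1, sub_self, add_zero]
  have haeK : l (a - e) = 0 := by rw [map_sub, hla, he1, sub_self]
  have hbeK : l (b - e) = 0 := by rw [map_sub, hlb, he1, sub_self]
  -- value of mu on a - e
  have hFFa : FF l u₀ e a = mu l u₀ (a - e) + cc l u₀ e := by
    unfold FF; rw [hla, one_smul, mul_one]
  have hFFb : FF l u₀ e b = mu l u₀ (b - e) + cc l u₀ e := by
    unfold FF; rw [hlb, one_smul, mul_one]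
  have hmus : mu l u₀ (k + (a - e)) = mu l u₀ k + mu l u₀ (a - e) :=
    mu_add hl hG hu hνu hk0 haeK
  have hmur : mu l u₀ (k + (b - e)) = mu l u₀ k + mu l u₀ (b - e) :=
    mu_add hl hG hu hνu hk0 hbeK
  have hεa : ε ≤ FF l u₀ e a := by
    rw [hεdef]
    have := min_le_left (FF l u₀ e a) (FF l u₀ e b)
    linarith [min_le_left (FF l u₀ e a) (FF l u₀ e b), lt_min hFa' hFb']
  have hεb : ε ≤ FF l u₀ e b := by
    rw [hεdef]
    linarith [min_le_right (FF l u₀ e a) (FF l u₀ e b), lt_min hFa' hFb']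
  have hmuspos : 0 < mu l u₀ (k + (a - e)) := by
    rw [hmus]
    have : mu l u₀ (a - e) = FF l u₀ e a - cc l u₀ e := by linarith [hFFa]
    rw [this]
    linarith
  have hmurpos : 0 < mu l u₀ (k + (b - e)) := by
    rw [hmur]
    have : mu l u₀ (b - e) = FF l u₀ e b - cc l u₀ e := by linarith [hFFb]
    rw [this]
    linarith
  obtain ⟨hals, hvs⟩ := mu_pos_al hl hmuspos
  obtain ⟨halr, hvr⟩ := mu_pos_al hl hmurpos
  have hνs : 0 < nu l (k + (a - e)) := by rw [← hvs]; exact hmuspos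
  have hνr : 0 < nu l (k + (b - e)) := by rw [← hvr]; exact hmurpos
  -- aligned with each other
  have halsr : nu l ((k + (a - e)) + (k + (b - e))) =
      nu l (k + (a - e)) + nu l (k + (b - e)) := by
    have h1 : nu l (u₀ + (k + (b - e))) = nu l u₀ + nu l (k + (b - e)) := by
      rw [add_comm, halr]; ring
    exact al_trans hl hG hs1K hu hr1K hνu hνr hals h1
  have habs := al_abs hl hG hs1K hr1K halsr
  -- disjoint positive parts
  have hsle : k + (a - e) ≤ a := by
    have : k - e ≤ 0 := sub_nonpos.2 hke
    calc k + (a - e) = a + (k - e) := by abel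
      _ ≤ a + 0 := add_le_add_right this _
      _ = a := add_zero _
  have hrle : k + (b - e) ≤ b := by
    have : k - e ≤ 0 := sub_nonpos.2 hke
    calc k + (b - e) = b + (k - e) := by abel
      _ ≤ b + 0 := add_le_add_right this _
      _ = b := add_zero _
  have hinf0 : (k + (a - e))⁺ ⊓ (k + (b - e))⁺ = 0 := by
    refine le_antisymm ?_ (le_inf (posPart_nonneg _) (posPart_nonneg _))
    calc (k + (a - e))⁺ ⊓ (k + (b - e))⁺ ≤ a ⊓ b := by
          refine inf_le_inf ?_ ?_
          · exact (posPart_mono hsle).trans (le_of_eq (posPart_eq_self.2 ha))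
          · exact (posPart_mono hrle).trans (le_of_eq (posPart_eq_self.2 hb))
      _ = 0 := hab
  have hform := nu_sub_formula hG hs1K hr1K
  rw [hinf0, map_zero] at hform
  have harg : (k + (a - e)) - (k + (b - e)) = a - b := by abel
  rw [harg] at hform habs
  have hcontra : |nu l (k + (a - e)) - nu l (k + (b - e))| <
      nu l (k + (a - e)) + nu l (k + (b - e)) := abs_sub_lt_add hνs hνr
  rw [← habs] at hcontra
  rw [hform] at hcontra
  linarith

include hl hG hu hνu he0 he1 in
private lemma FF_disj {a b : X} (ha : 0 ≤ a) (hb : 0 ≤ b) (hab : a ⊓ b = 0) :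
    FF l u₀ e a = 0 ∨ FF l u₀ e b = 0 := by
  rcases eq_or_lt_of_le (hl a ha) with hla | hla
  · left
    have h := FF_bounds hl hG hu hνu he0 he1 ha
    rw [← hla] at h
    linarith [h.1, h.2]
  rcases eq_or_lt_of_le (hl b hb) with hlb | hlb
  · right
    have h := FF_bounds hl hG hu hνu he0 he1 hb
    rw [← hlb] at h
    linarith [h.1, h.2]
  have ha' : 0 ≤ (l a)⁻¹ • a := smul_nonneg (inv_nonneg.2 hla.le) ha
  have hb' : 0 ≤ (l b)⁻¹ • b := smul_nonneg (inv_nonneg.2 hlb.le) hb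
  have hab' : ((l a)⁻¹ • a) ⊓ ((l b)⁻¹ • b) = 0 :=
    smul_disj (inv_pos.2 hla) (inv_pos.2 hlb) ha hb hab
  have hla' : l ((l a)⁻¹ • a) = 1 := by
    rw [map_smul, smul_eq_mul, inv_mul_cancel₀ hla.ne']
  have hlb' : l ((l b)⁻¹ • b) = 1 := by
    rw [map_smul, smul_eq_mul, inv_mul_cancel₀ hlb.ne']
  rcases FF_disj_norm hl hG hu hνu he0 he1 ha' hb' hab' hla' hlb' with h | h
  · left
    have := FF_smul hl hG hu hνu he1 (l a)⁻¹ a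
    rw [h] at this
    have h2 : (l a)⁻¹ * FF l u₀ e a = 0 := this.symm
    rcases mul_eq_zero.1 h2 with h3 | h3
    · exact absurd h3 (inv_ne_zero hla.ne')
    · exact h3
  · right
    have := FF_smul hl hG hu hνu he1 (l b)⁻¹ b
    rw [h] at this
    have h2 : (l b)⁻¹ * FF l u₀ e b = 0 := this.symm
    rcases mul_eq_zero.1 h2 with h3 | h3
    · exact absurd h3 (inv_ne_zero hlb.ne')
    · exact h3

end Assemble

section Gpart

variable (hl : IsPositive l) (hG : IsGrothendieckSubspace (LinearMap.ker l))
  (hu : l u₀ = 0) (hνu : 0 < nu l u₀) {e : X} (he0 : 0 ≤ e) (he1 : l e = 1)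

include hl hG hu hνu in
private lemma mu_neg_u0 {x : X} (hx : l x = 0) : mu l (-u₀) x = -(mu l u₀ x) := by
  have hnu' : nu l (-u₀) = nu l u₀ := nu_neg hu
  rcases eq_or_lt_of_le (nu_nonneg hl x) with h0 | h0
  · rw [mu_of_zero h0.symm, mu_of_zero h0.symm, neg_zero]
  · have hxuK : l (x - u₀) = 0 := by rw [map_sub, hx, hu, sub_zero]
    have harg : x + -u₀ = x - u₀ := by abel
    by_cases hax : nu l (x + u₀) = nu l x + nu l u₀
    · have h1 : ¬ nu l (x + -u₀) = nu l x + nu l (-u₀) := by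
        intro hcon
        rw [harg, hnu'] at hcon
        have habs := al_abs hl hG hx hu hax
        have := abs_sub_lt_add h0 hνu
        linarith
      unfold mu
      rw [if_neg h1, if_pos hax]
    · have hax' := al_of_not_al hl hG hu hx hax
      have h1 : nu l (x + -u₀) = nu l x + nu l (-u₀) := by
        rw [harg, hnu']
        have h2 : nu l (x - u₀) = nu l (-(x - u₀)) := (nu_neg hxuK).symm
        rw [h2, show -(x - u₀) = -x + u₀ by abel, hax', nu_neg hx]
      unfold mu
      rw [if_pos h1, if_neg hax, neg_neg]

include hl hG hu hνu he0 he1 in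
private lemma cc_sum : cc l u₀ e + cc l (-u₀) e = 1 := by
  have hu' : l (-u₀) = 0 := by rw [map_neg, hu, neg_zero]
  have hνu' : 0 < nu l (-u₀) := by rw [nu_neg hu]; exact hνu
  have hbdd : BddAbove (SS l u₀ e) := ⟨1, fun t ht => SS_bdd hl he0 he1 t ht⟩
  have hbdd' : BddAbove (SS l (-u₀) e) := ⟨1, fun t ht => SS_bdd hl he0 he1 t ht⟩
  have hle : cc l u₀ e + cc l (-u₀) e ≤ 1 := by
    have hub2 : ∀ s' ∈ SS l (-u₀) e, s' ≤ 1 - cc l u₀ e := by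
      rintro s' ⟨k₂, hk₂0, hk₂e, rfl⟩
      have hmuk₂ : mu l (-u₀) k₂ = -(mu l u₀ k₂) := mu_neg_u0 hl hG hu hνu hk₂0
      have hccb : cc l u₀ e ≤ 1 + mu l u₀ k₂ := by
        refine csSup_le ⟨0, SS_zero he0⟩ ?_
        rintro s ⟨k₁, hk₁0, hk₁e, rfl⟩
        have hk₂0' : l (-k₂) = 0 := by rw [map_neg, hk₂0, neg_zero]
        have hdiff : mu l u₀ (k₁ + -k₂) = mu l u₀ k₁ - mu l u₀ k₂ := by
          rw [mu_add hl hG hu hνu hk₁0 hk₂0', mu_neg hl hG hu hνu hk₂0]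
          ring
        have hb1 : mu l u₀ (k₁ + -k₂) ≤ nu l (k₁ + -k₂) := mu_le_nu hl _
        have hb2 : nu l (k₁ + -k₂) ≤ l (e - k₂) := by
          rw [nu]
          refine lmono hl ?_
          rw [posPart_def]
          refine sup_le ?_ (sub_nonneg.2 hk₂e)
          have h9 := sub_le_sub_right hk₁e k₂
          calc k₁ + -k₂ = k₁ - k₂ := by abel
            _ ≤ e - k₂ := h9
        have hb3 : l (e - k₂) = 1 := by rw [map_sub, he1, hk₂0, sub_zero]
        rw [hb3] at hb2
        linarith
      rw [hmuk₂]
      linarith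
    have h10 : cc l (-u₀) e ≤ 1 - cc l u₀ e :=
      csSup_le ⟨0, SS_zero (l := l) (u₀ := -u₀) he0⟩ hub2
    linarith
  have hge : 1 ≤ cc l u₀ e + cc l (-u₀) e := by
    -- find d with l d = 0, nu d = 1, mu d = 1
    have hd₀K : l ((nu l u₀)⁻¹ • u₀) = 0 := by rw [map_smul, hu, smul_zero]
    have hνd₀ : nu l ((nu l u₀)⁻¹ • u₀) = 1 := by
      rw [nu_smul (inv_nonneg.2 hνu.le), inv_mul_cancel₀ hνu.ne']
    obtain ⟨d, hdK, hνd, hmd⟩ :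
        ∃ d : X, l d = 0 ∧ nu l d = 1 ∧ mu l u₀ d = 1 := by
      rcases mu_cases (l := l) (u₀ := u₀) ((nu l u₀)⁻¹ • u₀) with h | h
      · exact ⟨(nu l u₀)⁻¹ • u₀, hd₀K, hνd₀, by rw [h, hνd₀]⟩
      · refine ⟨-((nu l u₀)⁻¹ • u₀), by rw [map_neg, hd₀K, neg_zero],
          by rw [nu_neg hd₀K, hνd₀], ?_⟩
        rw [mu_neg hl hG hu hνu hd₀K, h, hνd₀, neg_neg]
    have hk₂0 : l (e - d⁺) = 0 := by
      have : l (d⁺) = 1 := hνd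
      rw [map_sub, he1, this, sub_self]
    have hk₂e : e - d⁺ ≤ e := by
      have := posPart_nonneg d
      simpa using this
    have hk₁0 : l (e - d⁻) = 0 := by
      have h7 : l (d⁻) = 1 := by rw [lnegPart, hdK, sub_zero]; exact hνd
      rw [map_sub, he1, h7, sub_self]
    have hk₁e : e - d⁻ ≤ e := by
      have := negPart_nonneg d
      simpa using this
    have hrel : e - d⁺ + d = e - d⁻ := by
      have h7 := posPart_sub_negPart d
      calc e - d⁺ + d = e - d⁺ + (d⁺ - d⁻) := by rw [h7]
        _ = e - d⁻ := by abel
    have hmuk₁ : mu l u₀ (e - d⁻) = mu l u₀ (e - d⁺) + 1 := by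
      rw [← hrel, mu_add hl hG hu hνu hk₂0 hdK, hmd]
    have hc1 : mu l u₀ (e - d⁻) ≤ cc l u₀ e := le_csSup hbdd ⟨e - d⁻, hk₁0, hk₁e, rfl⟩
    have hc2 : mu l (-u₀) (e - d⁺) ≤ cc l (-u₀) e :=
      le_csSup hbdd' ⟨e - d⁺, hk₂0, hk₂e, rfl⟩
    rw [mu_neg_u0 hl hG hu hνu hk₂0] at hc2
    linarith
  linarith

end Gpart

private noncomputable def FFlm (hl : IsPositive l)
    (hG : IsGrothendieckSubspace (LinearMap.ker l)) {u₀ : X} (hu : l u₀ = 0)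
    (hνu : 0 < nu l u₀) {e : X} (he1 : l e = 1) : X →ₗ[ℝ] ℝ where
  toFun := FF l u₀ e
  map_add' := FF_add hl hG hu hνu he1
  map_smul' := fun t x => by
    simp only [RingHom.id_apply, smul_eq_mul]
    exact FF_smul hl hG hu hνu he1 t x

private lemma FFlm_apply (hl : IsPositive l)
    (hG : IsGrothendieckSubspace (LinearMap.ker l)) {u₀ : X} (hu : l u₀ = 0)
    (hνu : 0 < nu l u₀) {e : X} (he1 : l e = 1) (x : X) :
    FFlm hl hG hu hνu he1 x = FF l u₀ e x := rfl

private lemma FFlm_riesz (hl : IsPositive l)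
    (hG : IsGrothendieckSubspace (LinearMap.ker l)) {u₀ : X} (hu : l u₀ = 0)
    (hνu : 0 < nu l u₀) {e : X} (he0 : 0 ≤ e) (he1 : l e = 1) :
    IsRieszHom (FFlm hl hG hu hνu he1) := by
  apply rieszHom_of_posPart
  intro z
  have hdisj := FF_disj hl hG hu hνu he0 he1 (posPart_nonneg z) (negPart_nonneg z)
    (posPart_inf_negPart_eq_zero z)
  have hba := (FF_bounds hl hG hu hνu he0 he1 (posPart_nonneg z)).1
  have hbb := (FF_bounds hl hG hu hνu he0 he1 (negPart_nonneg z)).1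
  have hz : FFlm hl hG hu hνu he1 z =
      FF l u₀ e (z⁺) - FF l u₀ e (z⁻) := by
    rw [← posPart_sub_negPart z, map_sub]
    rw [posPart_sub_negPart z]
    rfl
  rw [FFlm_apply]
  rcases hdisj with h | h
  · rw [h]
    have h2 : FFlm hl hG hu hνu he1 z ≤ 0 := by rw [hz, h]; linarith
    exact (sup_eq_right.2 h2).symm
  · have h2 : FFlm hl hG hu hνu he1 z = FF l u₀ e (z⁺) := by rw [hz, h]; ring
    rw [← h2]
    exact (sup_eq_left.2 (by rw [h2]; exact hba)).symm

private lemma FF_total (hl : IsPositive l)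
    (hG : IsGrothendieckSubspace (LinearMap.ker l)) {u₀ : X} (hu : l u₀ = 0)
    (hνu : 0 < nu l u₀) {e : X} (he0 : 0 ≤ e) (he1 : l e = 1) (x : X) :
    FF l u₀ e x + FF l (-u₀) e x = l x := by
  have hx' : l (x - l x • e) = 0 := karg e x he1
  have h1 : mu l (-u₀) (x - l x • e) = -(mu l u₀ (x - l x • e)) :=
    mu_neg_u0 hl hG hu hνu hx'
  have h2 := cc_sum hl hG hu hνu he0 he1
  unfold FF
  rw [h1]
  linear_combination (l x) * h2

private lemma l_riesz_of_null (hl : IsPositive l) {e : X} (he0 : 0 ≤ e) (he1 : l e = 1)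
    (hν : ∀ k : X, l k = 0 → l (k⁺) = 0) : IsRieszHom l := by
  apply rieszHom_of_posPart
  intro z
  have hk : l (z - l z • e) = 0 := karg e z he1
  have hk0 : l ((z - l z • e)⁺) = 0 := hν _ hk
  rcases le_or_gt 0 (l z) with hlz | hlz
  · have h1 : l z ≤ l (z⁺) := lmono hl (le_posPart z)
    have h2 : l (z⁺) ≤ l z := by
      have hzz : z = (z - l z • e) + l z • e := by abel
      have hle : z⁺ ≤ (z - l z • e)⁺ + l z • e := by
        rw [posPart_def]
        refine sup_le ?_ (add_nonneg (posPart_nonneg _) (smul_nonneg hlz he0))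
        calc z = (z - l z • e) + l z • e := hzz
          _ ≤ (z - l z • e)⁺ + l z • e := add_le_add_left (le_posPart _) _
      have := lmono hl hle
      rw [map_add, map_smul, hk0, he1, smul_eq_mul, mul_one, zero_add] at this
      exact this
    have h3 : l (z⁺) = l z := le_antisymm h2 h1
    rw [h3, sup_eq_left.2 hlz]
  · have hle : z ≤ z - l z • e := by
      have h5 : 0 ≤ (-(l z)) • e := smul_nonneg (by linarith) he0
      have h6 := add_le_add_right h5 z
      rw [add_zero] at h6
      calc z ≤ z + (-(l z)) • e := h6
        _ = z - l z • e := by rw [neg_smul]; abel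
    have h6 : l (z⁺) ≤ 0 := by
      have := lmono hl (posPart_mono hle)
      rw [hk0] at this
      exact this
    have h7 : 0 ≤ l (z⁺) := hl _ (posPart_nonneg z)
    rw [le_antisymm h6 h7, sup_eq_right.2 hlz.le]

private lemma riesz_pos {f : X →ₗ[ℝ] ℝ} (hf : IsRieszHom f) : IsPositive f := by
  intro x hx
  have h := hf x 0
  rw [sup_eq_left.2 hx, map_zero] at h
  rw [h]
  exact le_sup_right

private lemma riesz_inf {f : X →ₗ[ℝ] ℝ} (hf : IsRieszHom f) (a b : X) :
    f (a ⊓ b) = f a ⊓ f b := by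
  have h1 : a ⊓ b = a + b - a ⊔ b := by
    have := inf_add_sup a b
    rw [← this]; abel
  have h2 := inf_add_sup (f a) (f b)
  rw [h1, map_sub, map_add, hf]
  linarith

end SumTwoRH

open SumTwoRH in
theorem sum_of_two_riesz_homs_iff (l : X →ₗ[ℝ] ℝ) :
    (∃ f g : X →ₗ[ℝ] ℝ, IsRieszHom f ∧ IsRieszHom g ∧ l = f + g) ↔
      IsPositive l ∧ IsGrothendieckSubspace (LinearMap.ker l) := by
  constructor
  · rintro ⟨f, g, hf, hg, rfl⟩
    constructor
    · intro x hx
      simp only [LinearMap.add_apply]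
      have h1 := riesz_pos hf x hx
      have h2 := riesz_pos hg x hx
      linarith
    · intro x hx y hy
      rw [LinearMap.mem_ker] at hx hy ⊢
      simp only [LinearMap.add_apply] at hx hy ⊢
      have hgx : g x = -f x := by linarith
      have hgy : g y = -f y := by linarith
      rw [map_add, map_add]
      have e1 : f (x ⊔ y ⊔ 0) = f x ⊔ f y ⊔ 0 := by rw [hf, hf, map_zero]
      have e2 : g (x ⊔ y ⊔ 0) = g x ⊔ g y ⊔ 0 := by rw [hg, hg, map_zero]
      have e3 : f (x ⊓ y ⊓ 0) = f x ⊓ f y ⊓ 0 := by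
        rw [riesz_inf hf, riesz_inf hf, map_zero]
      have e4 : g (x ⊓ y ⊓ 0) = g x ⊓ g y ⊓ 0 := by
        rw [riesz_inf hg, riesz_inf hg, map_zero]
      rw [e1, e2, e3, e4, hgx, hgy]
      have n1 : (-f x) ⊔ (-f y) ⊔ 0 = -(f x ⊓ f y ⊓ 0) := by
        rw [neg_inf, neg_inf, neg_zero]
      have n2 : (-f x) ⊓ (-f y) ⊓ 0 = -(f x ⊔ f y ⊔ 0) := by
        rw [neg_sup, neg_sup, neg_zero]
      rw [n1, n2]
      ring
  · rintro ⟨hl, hG⟩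
    by_cases hz : ∀ x, l x = 0
    · refine ⟨0, 0, ?_, ?_, ?_⟩
      · intro x y; simp
      · intro x y; simp
      · ext x; simp [hz]
    · push_neg at hz
      obtain ⟨x₀, hx₀⟩ := hz
      have hsplit : l (x₀⁺) - l (x₀⁻) = l x₀ := by rw [← map_sub, posPart_sub_negPart]
      obtain ⟨a, ha0, hla⟩ : ∃ a : X, 0 ≤ a ∧ 0 < l a := by
        rcases lt_or_ge 0 (l (x₀⁺)) with h | h
        · exact ⟨x₀⁺, posPart_nonneg x₀, h⟩
        · refine ⟨x₀⁻, negPart_nonneg x₀, ?_⟩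
          have h1 : 0 ≤ l (x₀⁺) := hl _ (posPart_nonneg x₀)
          have h2 : 0 ≤ l (x₀⁻) := hl _ (negPart_nonneg x₀)
          have h3 : l (x₀⁺) = 0 := le_antisymm h h1
          rcases h2.lt_or_eq with h4 | h4
          · exact h4
          · exfalso; apply hx₀; linarith
      have he0 : 0 ≤ (l a)⁻¹ • a := smul_nonneg (inv_nonneg.2 hla.le) ha0
      have he1 : l ((l a)⁻¹ • a) = 1 := by
        rw [map_smul, smul_eq_mul, inv_mul_cancel₀ hla.ne']
      by_cases hν : ∀ k : X, l k = 0 → l (k⁺) = 0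
      · refine ⟨l, 0, l_riesz_of_null hl he0 he1 hν, ?_, ?_⟩
        · intro x y; simp
        · ext x; simp
      · push_neg at hν
        obtain ⟨u₀, hu, hνu0⟩ := hν
        have hνu : 0 < nu l u₀ := (hl _ (posPart_nonneg u₀)).lt_of_ne (Ne.symm hνu0)
        have hu' : l (-u₀) = 0 := by rw [map_neg, hu, neg_zero]
        have hνu' : 0 < nu l (-u₀) := by rw [nu_neg hu]; exact hνu
        refine ⟨FFlm hl hG hu hνu he1, FFlm hl hG hu' hνu' he1,
          FFlm_riesz hl hG hu hνu he0 he1, FFlm_riesz hl hG hu' hνu' he0 he1, ?_⟩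
        ext x
        simp only [LinearMap.add_apply, FFlm_apply]
        exact (FF_total hl hG hu hνu he0 he1 x).symm
end

section
/- Let l be an order bounded linear functional on a Riesz space X with positive part l₊ ≠ 0 and negative part l₋ ≠ 0. Then the kernel of l is a Grothendieck subspace of X if and only if both l₊ and l₋ are Riesz homomorphisms on X. -/
variable {X : Type*} [Lattice X] [AddCommGroup X]
  [CovariantClass X X (· + ·) (· ≤ ·)] [Module ℝ X] [PosSMulMono ℝ X]

namespace KerGroth

instance : CovariantClass X X (Function.swap (· + ·)) (· ≤ ·) :=
  ⟨fun a b c h => by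
    simp only [Function.swap]
    rw [add_comm b a, add_comm c a]
    exact add_le_add_right h a⟩

theorem pos_mono {p : X →ₗ[ℝ] ℝ} (hp : IsPositive p) {x y : X} (h : x ≤ y) :
    p x ≤ p y := by
  have h1 := hp (y - x) (sub_nonneg.mpr h)
  rw [map_sub] at h1
  linarith

/-- upper bound: `l y ≤ p x` for `0 ≤ y ≤ x`. -/
theorem le_posPart {l p : X →ₗ[ℝ] ℝ} (hp : IsPosPartOf l p) {x y : X}
    (hy0 : 0 ≤ y) (hyx : y ≤ x) : l y ≤ p x := by
  have h1 := hp.2.1 y hy0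
  simp only [LinearMap.sub_apply] at h1
  have h2 : p y ≤ p x := pos_mono hp.1 hyx
  linarith

/-- approximate selection from the sup formula. -/
theorem exists_approx {l p : X →ₗ[ℝ] ℝ} (hp : IsPosPartOf l p) {x : X}
    (hx : 0 ≤ x) {c : ℝ} (hc : c < p x) :
    ∃ y : X, 0 ≤ y ∧ y ≤ x ∧ c < l y := by
  have hformula := hp.2.2 x hx
  rw [hformula] at hc
  have hne : {r : ℝ | ∃ y : X, 0 ≤ y ∧ y ≤ x ∧ l y = r}.Nonempty :=
    ⟨0, 0, le_refl 0, hx, map_zero l⟩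
  obtain ⟨r, ⟨y, hy0, hyx, hly⟩, hr⟩ := exists_lt_of_lt_csSup hne hc
  exact ⟨y, hy0, hyx, by rwa [hly]⟩

/-- `p - l` is the positive part of `-l`. -/
theorem isPosPartOf_neg {l p : X →ₗ[ℝ] ℝ} (hp : IsPosPartOf l p) :
    IsPosPartOf (-l) (p - l) := by
  refine ⟨hp.2.1, ?_, ?_⟩
  · have : p - l - -l = p := by abel
    rw [this]; exact hp.1
  · intro x hx
    set T : Set ℝ := {r : ℝ | ∃ y : X, 0 ≤ y ∧ y ≤ x ∧ (-l) y = r} with hT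
    have hTne : T.Nonempty := ⟨0, 0, le_refl 0, hx, map_zero (-l)⟩
    have hlub : IsLUB T (p x - l x) := by
      constructor
      · rintro r ⟨y, hy0, hyx, hly⟩
        have h1 : l (x - y) ≤ p x := le_posPart hp (by simpa using hyx) (by simpa using hy0)
        have : l (x - y) = l x - l y := by simp
        rw [this] at h1
        simp only [LinearMap.neg_apply] at hly
        linarith
      · intro c hc
        have hub : ∀ r ∈ {r : ℝ | ∃ y : X, 0 ≤ y ∧ y ≤ x ∧ l y = r}, r ≤ c + l x := by
          rintro r ⟨y, hy0, hyx, hly⟩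
          have hmem : (-l) (x - y) ∈ T := ⟨x - y, by simpa using hyx, by simpa using hy0, rfl⟩
          have h2 : (-l) (x - y) ≤ c := hc hmem
          have : (-l) (x - y) = l y - l x := by simp
          rw [this] at h2
          linarith
        have hne : {r : ℝ | ∃ y : X, 0 ≤ y ∧ y ≤ x ∧ l y = r}.Nonempty :=
          ⟨0, 0, le_refl 0, hx, map_zero l⟩
        have := csSup_le hne hub
        rw [← hp.2.2 x hx] at this
        linarith
    have : p x - l x = sSup T := (hlub.csSup_eq hTne).symm
    simpa using this

theorem sub_posPart_negPart (z : X) : z ⊔ 0 - ((-z) ⊔ 0) = z := by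
  rw [sub_eq_iff_eq_add, add_sup]
  simp [sup_comm]

theorem inf_posPart_negPart (z : X) : (z ⊔ 0) ⊓ ((-z) ⊔ 0) = 0 := by
  rw [← posPart_def, ← negPart_def]
  exact posPart_inf_negPart_eq_zero z

set_option maxHeartbeats 1000000 in
/-- Core lemma: if `ker l` is Grothendieck and `l⁻ ≠ 0`, then `p` kills one of
two disjoint positive elements. -/
theorem disjoint_vanish {l p : X →ₗ[ℝ] ℝ} (hp : IsPosPartOf l p)
    (hn0 : p - l ≠ 0) (hG : IsGrothendieckSubspace (LinearMap.ker l))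
    {a b : X} (ha : 0 ≤ a) (hb : 0 ≤ b) (hab : a ⊓ b = 0) :
    p a = 0 ∨ p b = 0 := by
  by_contra hcon
  push_neg at hcon
  obtain ⟨hpa, hpb⟩ := hcon
  have hpa' : 0 < p a := lt_of_le_of_ne (hp.1 a ha) (Ne.symm hpa)
  have hpb' : 0 < p b := lt_of_le_of_ne (hp.1 b hb) (Ne.symm hpb)
  set q : X →ₗ[ℝ] ℝ := p - l with hq
  have hqpos : IsPositive q := hp.2.1
  -- find w ≥ 0 with q w > 0
  obtain ⟨w, hw0, hqw⟩ : ∃ w : X, 0 ≤ w ∧ 0 < q w := by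
    by_contra hcw
    push_neg at hcw
    apply hn0
    ext z
    have h1 : q (z ⊔ 0) ≤ 0 := hcw (z ⊔ 0) le_sup_right
    have h1' : 0 ≤ q (z ⊔ 0) := hqpos _ le_sup_right
    have h2 : q ((-z) ⊔ 0) ≤ 0 := hcw ((-z) ⊔ 0) le_sup_right
    have h2' : 0 ≤ q ((-z) ⊔ 0) := hqpos _ le_sup_right
    have hdec : z ⊔ 0 - ((-z) ⊔ 0) = z := sub_posPart_negPart z
    have : q z = q (z ⊔ 0) - q ((-z) ⊔ 0) := by
      rw [← map_sub, hdec]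
    simp only [LinearMap.zero_apply]
    rw [this]; linarith
  set δ : ℝ := q w with hδ
  set μ : ℝ := min (p a) (p b) with hμ
  set P : ℝ := max (p a) (p b) with hP
  have hμ0 : 0 < μ := lt_min hpa' hpb'
  have hP0 : 0 < P := lt_of_lt_of_le hpa' (le_max_left _ _)
  set ε : ℝ := min (min (μ / 2) (δ / 2)) (μ * δ / (8 * P)) with hε
  have hε0 : 0 < ε :=
    lt_min (lt_min (by linarith) (by linarith))
      (div_pos (mul_pos hμ0 hqw) (by linarith : (0:ℝ) < 8 * P))
  have hεμ : ε ≤ μ / 2 := le_trans (min_le_left _ _) (min_le_left _ _)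
  have hεδ : ε ≤ δ / 2 := le_trans (min_le_left _ _) (min_le_right _ _)
  have hεP : ε ≤ μ * δ / (8 * P) := min_le_right _ _
  -- approximate components
  obtain ⟨ya, hya0, hyaa, hlya⟩ := exists_approx hp ha (show p a - ε < p a by linarith)
  obtain ⟨yb, hyb0, hybb, hlyb⟩ := exists_approx hp hb (show p b - ε < p b by linarith)
  obtain ⟨u, hu0, huw, hlu⟩ := exists_approx (isPosPartOf_neg hp) hw0
    (show q w - ε < (p - l) w from by rw [← hq]; linarith)
  -- basic numeric facts
  have hla_le : l ya ≤ p a := le_posPart hp hya0 hyaa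
  have hlb_le : l yb ≤ p b := le_posPart hp hyb0 hybb
  have hμa : μ ≤ p a := min_le_left _ _
  have hμb : μ ≤ p b := min_le_right _ _
  have hla0 : 0 < l ya := by linarith
  have hlb0 : 0 < l yb := by linarith
  simp only [LinearMap.neg_apply] at hlu
  have hlu0 : l u < 0 := by linarith
  have hqu_le : q u ≤ δ := by rw [hδ]; exact pos_mono hqpos huw
  have hpu0 : 0 ≤ p u := hp.1 u hu0
  have hqu_eq : q u = p u - l u := by simp [hq]
  have hqu_ge : δ - ε < q u := by rw [hqu_eq]; linarith
  have hpu_lt : p u < ε := by linarith [hqu_eq, hqu_le]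
  -- scalars
  set s : ℝ := l ya / (-l u) with hs
  set s' : ℝ := l yb / (-l u) with hs'
  have hlu0' : 0 < -l u := by linarith
  have hs0 : 0 < s := div_pos hla0 hlu0'
  have hs'0 : 0 < s' := div_pos hlb0 hlu0'
  set x : X := ya + s • u with hx
  set y : X := yb + s' • u with hy
  have hsu0 : 0 ≤ s • u := smul_nonneg hs0.le hu0
  have hs'u0 : 0 ≤ s' • u := smul_nonneg hs'0.le hu0
  have hx0 : 0 ≤ x := add_nonneg hya0 hsu0
  have hy0 : 0 ≤ y := add_nonneg hyb0 hs'u0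
  have hlu_ne : -l u ≠ 0 := ne_of_gt hlu0'
  have hdiv1 : s * -l u = l ya := by rw [hs]; exact div_mul_cancel₀ _ hlu_ne
  have hdiv2 : s' * -l u = l yb := by rw [hs']; exact div_mul_cancel₀ _ hlu_ne
  have hlx : l x = 0 := by
    have h1 : l x = l ya + s * l u := by rw [hx, map_add, map_smul, smul_eq_mul]
    rw [h1]; linarith [hdiv1]
  have hly : l y = 0 := by
    have h1 : l y = l yb + s' * l u := by rw [hy, map_add, map_smul, smul_eq_mul]
    rw [h1]; linarith [hdiv2]
  -- Grothendieck
  have hmem := hG x (LinearMap.mem_ker.mpr hlx) y (LinearMap.mem_ker.mpr hly)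
  have hx_sup : x ⊔ y ⊔ 0 = x ⊔ y := sup_eq_left.mpr (le_trans hx0 le_sup_left)
  have hx_inf : x ⊓ y ⊓ 0 = 0 := inf_eq_right.mpr (le_inf hx0 hy0)
  rw [hx_sup, hx_inf, add_zero, LinearMap.mem_ker] at hmem
  -- bounds on x ⊔ y
  set m : ℝ := min s s' with hm
  set M : ℝ := max s s' with hM
  have hm0 : 0 < m := lt_min hs0 hs'0
  have hmu_le_su : m • u ≤ s • u := by
    have : (0:X) ≤ (s - m) • u := smul_nonneg (by simp [hm, sub_nonneg, min_le_left]) hu0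
    have h := sub_smul s m u
    calc m • u ≤ m • u + (s - m) • u := le_add_of_nonneg_right this
      _ = s • u := by rw [h]; abel
  have hmu_le_s'u : m • u ≤ s' • u := by
    have : (0:X) ≤ (s' - m) • u := smul_nonneg (by simp [hm, sub_nonneg, min_le_right]) hu0
    have h := sub_smul s' m u
    calc m • u ≤ m • u + (s' - m) • u := le_add_of_nonneg_right this
      _ = s' • u := by rw [h]; abel
  have hsu_le_Mu : s • u ≤ M • u := by
    have : (0:X) ≤ (M - s) • u := smul_nonneg (by simp [hM, sub_nonneg, le_max_left]) hu0
    have h := sub_smul M s u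
    calc s • u ≤ s • u + (M - s) • u := le_add_of_nonneg_right this
      _ = M • u := by rw [h]; abel
  have hs'u_le_Mu : s' • u ≤ M • u := by
    have : (0:X) ≤ (M - s') • u := smul_nonneg (by simp [hM, sub_nonneg, le_max_right]) hu0
    have h := sub_smul M s' u
    calc s' • u ≤ s' • u + (M - s') • u := le_add_of_nonneg_right this
      _ = M • u := by rw [h]; abel
  -- disjointness of ya, yb
  have hyab : ya ⊓ yb = 0 := by
    apply le_antisymm
    · rw [← hab]; exact inf_le_inf hyaa hybb
    · exact le_inf hya0 hyb0
  have hsup_ab : ya ⊔ yb = ya + yb := by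
    have := inf_add_sup ya yb
    rw [hyab, zero_add] at this
    exact this
  -- lower bound: ya + yb + m•u ≤ x ⊔ y
  have hlow : ya + yb + m • u ≤ x ⊔ y := by
    have h1 : (ya + m • u) ⊔ (yb + m • u) ≤ x ⊔ y := by
      apply sup_le_sup
      · exact add_le_add_right hmu_le_su ya
      · exact add_le_add_right hmu_le_s'u yb
    have h2 : (ya + m • u) ⊔ (yb + m • u) = ya ⊔ yb + m • u := (sup_add ya yb (m • u)).symm
    rw [h2, hsup_ab] at h1
    exact h1
  -- upper bound: x ⊔ y ≤ ya + yb + M•u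
  have hhigh : x ⊔ y ≤ ya + yb + M • u := by
    apply sup_le
    · rw [hx]
      calc ya + s • u ≤ ya + M • u := add_le_add_right hsu_le_Mu ya
        _ ≤ ya + yb + M • u := by
            have : ya + M • u + yb = ya + yb + M • u := by abel
            rw [← this]
            exact le_add_of_nonneg_right hyb0
    · rw [hy]
      calc yb + s' • u ≤ yb + M • u := add_le_add_right hs'u_le_Mu yb
        _ ≤ ya + yb + M • u := by
            have : yb + M • u + ya = ya + yb + M • u := by abel
            rw [← this]
            exact le_add_of_nonneg_right hya0
  set r : X := x ⊔ y - (ya + yb + m • u) with hr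
  have hr0 : 0 ≤ r := by rw [hr]; simpa using hlow
  have hr_le : r ≤ (M - m) • u := by
    rw [hr, sub_le_iff_le_add]
    have h := sub_smul M m u
    calc x ⊔ y ≤ ya + yb + M • u := hhigh
      _ = (M - m) • u + (ya + yb + m • u) := by rw [h]; abel
  -- evaluate l on r
  have hlr : l r = -(l ya + l yb + m * l u) := by
    rw [hr, map_sub, hmem, map_add, map_add, map_smul, smul_eq_mul]
    ring
  have hqr : q r ≤ (M - m) * q u := by
    have := pos_mono hqpos hr_le
    rwa [map_smul, smul_eq_mul] at this
  have hpr : 0 ≤ p r := hp.1 r hr0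
  have hlr_ge : -((M - m) * q u) ≤ l r := by
    have : l r = p r - q r := by simp [hq]
    linarith
  -- key algebra: l ya + l yb = (s + s') * (-l u) and m + M = s + s'
  have hsum : l ya + l yb = (s + s') * (-l u) := by
    linarith [hdiv1, hdiv2]
  have hmM : m + M = s + s' := min_add_max s s'
  -- conclude m * q u ≤ M * p u
  have hkey : m * q u ≤ M * p u := by
    have h1 : l ya + l yb + m * l u = (m + M) * (-l u) + m * l u := by
      rw [hmM, ← hsum]
    have h2 : (m + M) * (-l u) + m * l u = M * (-l u) := by ring
    have h3 : l r = -(M * (-l u)) := by rw [hlr, h1, h2]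
    have h4 : -((M - m) * q u) ≤ -(M * (-l u)) := h3 ▸ hlr_ge
    have h5 : M * (-l u) ≤ (M - m) * q u := by linarith
    have h6 : M * (-l u) = M * q u - M * p u := by rw [hqu_eq]; ring
    have h7 : (M - m) * q u = M * q u - m * q u := by ring
    linarith
  -- numeric contradiction
  have hmin_la : μ - ε < min (l ya) (l yb) := lt_min (by linarith) (by linarith)
  have hmax_le : max (l ya) (l yb) ≤ P := max_le (le_trans hla_le (le_max_left _ _))
    (le_trans hlb_le (le_max_right _ _))
  have hm_eq : m = min (l ya) (l yb) / (-l u) := by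
    rw [hm, hs, hs', min_div_div_right hlu0'.le]
  have hM_eq : M = max (l ya) (l yb) / (-l u) := by
    rw [hM, hs, hs', max_div_div_right hlu0'.le]
  have hkey2 : min (l ya) (l yb) * q u ≤ max (l ya) (l yb) * p u := by
    have h := mul_le_mul_of_nonneg_right hkey hlu0'.le
    rw [hm_eq, hM_eq] at h
    have eA : min (l ya) (l yb) / (-l u) * q u * -l u = min (l ya) (l yb) * q u := by
      rw [div_mul_eq_mul_div, div_mul_cancel₀ _ hlu_ne]
    have eB : max (l ya) (l yb) / (-l u) * p u * -l u = max (l ya) (l yb) * p u := by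
      rw [div_mul_eq_mul_div, div_mul_cancel₀ _ hlu_ne]
    rw [eA, eB] at h
    exact h
  have c1 : μ / 2 * (δ / 2) ≤ min (l ya) (l yb) * q u := by
    have h1 : μ / 2 ≤ min (l ya) (l yb) := by linarith
    have h2 : δ / 2 ≤ q u := by linarith
    have h3 : 0 ≤ μ / 2 := by linarith
    have h4 : 0 ≤ δ / 2 := by linarith
    exact mul_le_mul h1 h2 h4 (le_trans h3 h1)
  have c2 : max (l ya) (l yb) * p u ≤ P * ε :=
    mul_le_mul hmax_le hpu_lt.le hpu0 hP0.le
  have c3 : P * ε ≤ μ * δ / 8 := by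
    have h1 := mul_le_mul_of_nonneg_left hεP hP0.le
    have hPne : P ≠ 0 := ne_of_gt hP0
    have h2 : P * (μ * δ / (8 * P)) = μ * δ / 8 := by
      field_simp
    linarith [h2 ▸ h1]
  have hδ0 : 0 < δ := hqw
  have hμδ : 0 < μ * δ := mul_pos hμ0 hδ0
  linarith [c1, c2, c3, hkey2, hμδ]

theorem rieszHom_of_disjoint_vanish {p : X →ₗ[ℝ] ℝ} (hpos : IsPositive p)
    (hd : ∀ a b : X, 0 ≤ a → 0 ≤ b → a ⊓ b = 0 → p a = 0 ∨ p b = 0) :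
    IsRieszHom p := by
  have hpos_part : ∀ z : X, p (z ⊔ 0) = max (p z) 0 := by
    intro z
    set a := z ⊔ 0 with hadef
    set b := (-z) ⊔ 0 with hbdef
    have ha : 0 ≤ a := le_sup_right
    have hb : 0 ≤ b := le_sup_right
    have hab : a ⊓ b = 0 := inf_posPart_negPart z
    have hsub : a - b = z := sub_posPart_negPart z
    have hz : p z = p a - p b := by rw [← hsub, map_sub]
    have hpa : 0 ≤ p a := hpos a ha
    have hpb : 0 ≤ p b := hpos b hb
    rcases hd a b ha hb hab with h | h
    · have hz' : p z ≤ 0 := by rw [hz, h]; linarith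
      rw [max_eq_right hz']
      exact h
    · have hz' : p z = p a := by rw [hz, h]; ring
      rw [hz', max_eq_left hpa]
  intro x y
  have hxy : x ⊔ y = y + ((x - y) ⊔ 0) := by
    rw [add_sup, add_zero]
    have : y + (x - y) = x := by abel
    rw [this, sup_comm]
  rw [hxy, map_add, hpos_part, map_sub]
  rcases le_total (p x) (p y) with h | h
  · rw [max_eq_right (by linarith : p x - p y ≤ 0), max_eq_right h]; ring
  · rw [max_eq_left (by linarith : 0 ≤ p x - p y), max_eq_left h]; ring

theorem rieszHom_inf {f : X →ₗ[ℝ] ℝ} (hf : IsRieszHom f) (a b : X) :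
    f (a ⊓ b) = f a ⊓ f b := by
  have h1 : a ⊓ b = -(-a ⊔ -b) := by rw [← neg_inf, neg_neg]
  rw [h1, map_neg, hf, map_neg, map_neg, ← neg_inf, neg_neg]

end KerGroth

open KerGroth

theorem ker_grothendieck_iff_parts_riesz_homs (l p : X →ₗ[ℝ] ℝ)
    (hp : IsPosPartOf l p) (hp0 : p ≠ 0) (hn0 : p - l ≠ 0) :
    IsGrothendieckSubspace (LinearMap.ker l) ↔
      IsRieszHom p ∧ IsRieszHom (p - l) := by
  constructor
  · intro hG
    constructor
    · exact rieszHom_of_disjoint_vanish hp.1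
        (fun a b ha hb hab => disjoint_vanish hp hn0 hG ha hb hab)
    · have hq : IsPosPartOf (-l) (p - l) := isPosPartOf_neg hp
      have hker : LinearMap.ker (-l) = LinearMap.ker l := by
        ext z; simp [LinearMap.mem_ker]
      have hG' : IsGrothendieckSubspace (LinearMap.ker (-l)) := by
        rw [hker]; exact hG
      have hn0' : (p - l) - (-l) ≠ 0 := by
        have h : p - l - -l = p := by abel
        rw [h]; exact hp0
      exact rieszHom_of_disjoint_vanish hq.1
        (fun a b ha hb hab => disjoint_vanish hq hn0' hG' ha hb hab)
  · rintro ⟨hP, hQ⟩ x hx y hy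
    rw [LinearMap.mem_ker] at hx hy ⊢
    have hqx : (p - l) x = p x := by simp [hx]
    have hqy : (p - l) y = p y := by simp [hy]
    have hl : ∀ z : X, l z = p z - (p - l) z := by intro z; simp
    rw [hl, map_add, map_add, hP, hP, rieszHom_inf hP, rieszHom_inf hP,
      hQ, hQ, rieszHom_inf hQ, rieszHom_inf hQ, map_zero, map_zero,
      hqx, hqy]
    ring
end

section
/- Let l be an order bounded linear functional on a Riesz space X with l₊ ≠ 0 and l₋ ≠ 0. Then the kernel of l is a Grothendieck subspace of X if and only if the kernel of l is a Riesz subspace of X. -/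
variable {X : Type*} [Lattice X] [AddCommGroup X]
  [CovariantClass X X (· + ·) (· ≤ ·)] [Module ℝ X] [PosSMulMono ℝ X]

/-- A nonzero positive functional is positive at some positive element. -/
lemma exists_pos_apply (f : X →ₗ[ℝ] ℝ) (hf : IsPositive f) (hf0 : f ≠ 0) :
    ∃ x : X, 0 ≤ x ∧ 0 < f x := by
  by_contra h
  push_neg at h
  apply hf0
  ext x
  have hx : x = x⁺ - x⁻ := (posPart_sub_negPart x).symm
  have h1 : f x⁺ = 0 := le_antisymm (h _ (posPart_nonneg x)) (hf _ (posPart_nonneg x))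
  have h2 : f x⁻ = 0 := le_antisymm (h _ (negPart_nonneg x)) (hf _ (negPart_nonneg x))
  have h3 : f (x⁺ - x⁻) = f x := by rw [posPart_sub_negPart]
  rw [map_sub, h1, h2] at h3
  rw [LinearMap.zero_apply]
  linarith

theorem ker_grothendieck_iff_riesz_subspace (l p : X →ₗ[ℝ] ℝ)
    (hp : IsPosPartOf l p) (hp0 : p ≠ 0) (hn0 : p - l ≠ 0) :
    IsGrothendieckSubspace (LinearMap.ker l) ↔
      IsRieszSubspace (LinearMap.ker l) := by
  obtain ⟨hppos, hqpos, hsup⟩ := hp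
  -- an element with positive value
  obtain ⟨a, ha0, hla⟩ : ∃ a : X, 0 ≤ a ∧ 0 < l a := by
    obtain ⟨u, hu0, hpu⟩ := exists_pos_apply p hppos hp0
    have h := hsup u hu0
    have hne : (0 : ℝ) ∈ {r : ℝ | ∃ y : X, 0 ≤ y ∧ y ≤ u ∧ l y = r} :=
      ⟨0, le_refl 0, hu0, map_zero l⟩
    obtain ⟨r, ⟨y, hy0, _, hly⟩, hr⟩ :=
      exists_lt_of_lt_csSup ⟨0, hne⟩ (h ▸ hpu)
    exact ⟨y, hy0, hly ▸ hr⟩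
  -- an element with negative value
  obtain ⟨c, hc0, hlc⟩ : ∃ c : X, 0 ≤ c ∧ l c < 0 := by
    obtain ⟨u, hu0, hqu⟩ := exists_pos_apply (p - l) hqpos hn0
    have hql : l u < p u := by
      have := hqu
      rw [LinearMap.sub_apply] at this
      linarith
    have h := hsup u hu0
    have hne : l u ∈ {r : ℝ | ∃ y : X, 0 ≤ y ∧ y ≤ u ∧ l y = r} :=
      ⟨u, hu0, le_refl u, rfl⟩
    obtain ⟨r, ⟨y, hy0, hyu, hly⟩, hr⟩ :=
      exists_lt_of_lt_csSup ⟨l u, hne⟩ (h ▸ hql)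
    refine ⟨u - y, sub_nonneg.mpr hyu, ?_⟩
    rw [map_sub, hly]
    linarith
  -- the kernel is majorizing
  have maj : ∀ w : X, ∃ z : X, l z = 0 ∧ w ≤ z := by
    intro w
    rcases le_or_gt 0 (l w) with hw | hw
    · refine ⟨w + (l w / (-l c)) • c, ?_, ?_⟩
      · have hc : l c ≠ 0 := ne_of_lt hlc
        have hmul : l w / -l c * l c = -l w := by
          rw [div_mul_eq_mul_div, mul_div_assoc, div_neg, div_self hc, mul_neg,
            mul_one]
        rw [map_add, map_smul, smul_eq_mul, hmul, add_neg_cancel]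
      · exact le_add_of_nonneg_right
          (smul_nonneg (div_nonneg hw (by linarith)) hc0)
    · refine ⟨w + ((-l w) / l a) • a, ?_, ?_⟩
      · have ha : l a ≠ 0 := ne_of_gt hla
        rw [map_add, map_smul, smul_eq_mul]
        field_simp
        ring
      · exact le_add_of_nonneg_right
          (smul_nonneg (div_nonneg (by linarith) (le_of_lt hla)) ha0)
  constructor
  · -- Grothendieck → Riesz
    intro hG x hx y hy
    rw [LinearMap.mem_ker] at hx hy
    obtain ⟨z, hz, hzm⟩ := maj (-(x ⊓ y))
    have hinf : (0 : X) ≤ x ⊓ y + z := by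
      have h := add_le_add_right hzm (x ⊓ y)
      simpa using h
    have hsup0 : (0 : X) ≤ x ⊔ y + z :=
      hinf.trans (add_le_add_left inf_le_sup z)
    have hxz : x + z ∈ LinearMap.ker l := by
      simp [LinearMap.mem_ker, hx, hz]
    have hyz : y + z ∈ LinearMap.ker l := by
      simp [LinearMap.mem_ker, hy, hz]
    have key := hG _ hxz _ hyz
    have e1 : (x + z) ⊔ (y + z) = x ⊔ y + z := (sup_add x y z).symm
    have e2 : (x + z) ⊓ (y + z) = x ⊓ y + z := (inf_add x y z).symm
    rw [e1, e2, sup_eq_left.mpr hsup0, inf_eq_right.mpr hinf, add_zero,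
      LinearMap.mem_ker, map_add, hz, add_zero] at key
    refine ⟨LinearMap.mem_ker.mpr key, LinearMap.mem_ker.mpr ?_⟩
    have h4 : l (x ⊓ y) + l (x ⊔ y) = l x + l y := by
      rw [← map_add, inf_add_sup, map_add]
    linarith
  · -- Riesz → Grothendieck
    intro hR x hx y hy
    have h0 : (0 : X) ∈ LinearMap.ker l := (LinearMap.ker l).zero_mem
    have h1 := hR x hx y hy
    have h2 := (hR _ h1.1 0 h0).1
    have h3 := (hR _ h1.2 0 h0).2
    exact (LinearMap.ker l).add_mem h2 h3
end

section
/- The kernel of an order bounded linear functional l on a Riesz space X is a Grothendieck subspace if and only if the kernel of the modulus |l| is a Grothendieck subspace. -/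
variable {X : Type*} [Lattice X] [AddCommGroup X]
  [CovariantClass X X (· + ·) (· ≤ ·)] [Module ℝ X] [PosSMulMono ℝ X]

set_option linter.unusedSectionVars false
set_option maxHeartbeats 1000000



namespace GrothendieckKer

lemma smul_mono_scalar {s t : ℝ} (h : s ≤ t) {a : X} (ha : 0 ≤ a) : s • a ≤ t • a := by
  have h0 : 0 ≤ (t - s) • a := smul_nonneg (by linarith) ha
  rw [sub_smul] at h0
  exact sub_nonneg.1 h0

/-- `a ⊓ b + (a - b)⁺ = a` -/
lemma inf_add_posPart (a b : X) : a ⊓ b + (a - b)⁺ = a := by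
  have h1 : (a - b)⁺ = (a ⊔ b) - b := by
    rw [posPart_def, sup_sub, sub_self]
  rw [h1]
  linear_combination (norm := abel) inf_add_sup a b

lemma posPart_sub_of_nonneg (x c : X) (hc : 0 ≤ c) : (x - c)⁺ = (x⁺ - c)⁺ := by
  rw [posPart_def x, posPart_def, posPart_def, sup_sub, sup_assoc, zero_sub,
    sup_comm (-c) 0, sup_eq_left.2 (neg_nonpos.2 hc)]

/-- `x ⊓ (c + d) ≤ x ⊓ c + x ⊓ d` for nonneg elements -/
lemma inf_add_le_inf_add_inf (x c d : X) (hx : 0 ≤ x) (hc : 0 ≤ c) (hd : 0 ≤ d) :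
    x ⊓ (c + d) ≤ x ⊓ c + x ⊓ d := by
  have h1 : x ⊓ (c + d) ≤ x ⊓ c + d := by
    calc x ⊓ (c + d) ≤ (x + d) ⊓ (c + d) :=
          inf_le_inf_right _ (le_add_of_nonneg_right hd)
    _ = x ⊓ c + d := by rw [add_comm x d, add_comm c d, ← add_inf, add_comm]
  have h2 : x ⊓ (c + d) ≤ x ⊓ c + x :=
    le_trans inf_le_left (le_add_of_nonneg_left (le_inf hx hc))
  calc x ⊓ (c + d) ≤ (x ⊓ c + d) ⊓ (x ⊓ c + x) := le_inf h1 h2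
  _ = x ⊓ c + d ⊓ x := by rw [← add_inf]
  _ = x ⊓ c + x ⊓ d := by rw [inf_comm d x]

/-- translation-style bound: `x ⊓ (c + d) ≤ x ⊓ c + d` -/
lemma inf_add_le_inf_add (x c d : X) (hd : 0 ≤ d) : x ⊓ (c + d) ≤ x ⊓ c + d := by
  calc x ⊓ (c + d) ≤ (x + d) ⊓ (c + d) :=
        inf_le_inf_right _ (le_add_of_nonneg_right hd)
  _ = x ⊓ c + d := by rw [add_comm x d, add_comm c d, ← add_inf, add_comm]

/-- sum of two disjoint nonneg elements below a common bound -/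
lemma disjoint_add_le (a b w : X) (hab : a ⊓ b = 0) (ha : a ≤ w) (hb : b ≤ w) :
    a + b ≤ w := by
  have : a + b = a ⊔ b := by
    rw [← inf_add_sup a b, hab, zero_add]
  rw [this]; exact sup_le ha hb

lemma disjoint_inf_add_inf (a b w : X) (ha : 0 ≤ a) (hb : 0 ≤ b) (hw : 0 ≤ w)
    (hab : a ⊓ b = 0) : (a + b) ⊓ w = a ⊓ w + b ⊓ w := by
  apply le_antisymm
  · rw [inf_comm (a+b) w, inf_comm a w, inf_comm b w]
    exact inf_add_le_inf_add_inf w a b hw ha hb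
  · apply le_inf
    · exact add_le_add inf_le_left inf_le_left
    · apply disjoint_add_le _ _ _ _ inf_le_right inf_le_right
      apply le_antisymm _ (le_inf (le_inf ha hw) (le_inf hb hw))
      calc (a ⊓ w) ⊓ (b ⊓ w) ≤ a ⊓ b := inf_le_inf inf_le_left inf_le_left
      _ = 0 := hab

lemma smul_inf_of_pos (t : ℝ) (ht : 0 < t) (a b : X) : t • (a ⊓ b) = (t • a) ⊓ (t • b) := by
  apply le_antisymm
  · exact le_inf (smul_le_smul_of_nonneg_left inf_le_left ht.le)
      (smul_le_smul_of_nonneg_left inf_le_right ht.le)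
  · have h1 : t⁻¹ • ((t • a) ⊓ (t • b)) ≤ a ⊓ b := by
      apply le_inf
      · calc t⁻¹ • ((t • a) ⊓ (t • b)) ≤ t⁻¹ • (t • a) :=
              smul_le_smul_of_nonneg_left inf_le_left (by positivity)
        _ = a := by rw [smul_smul, inv_mul_cancel₀ ht.ne', one_smul]
      · calc t⁻¹ • ((t • a) ⊓ (t • b)) ≤ t⁻¹ • (t • b) :=
              smul_le_smul_of_nonneg_left inf_le_right (by positivity)
        _ = b := by rw [smul_smul, inv_mul_cancel₀ ht.ne', one_smul]
    calc (t • a) ⊓ (t • b) = t • (t⁻¹ • ((t • a) ⊓ (t • b))) := by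
          rw [smul_smul, mul_inv_cancel₀ ht.ne', one_smul]
    _ ≤ t • (a ⊓ b) := smul_le_smul_of_nonneg_left h1 ht.le

lemma smul_disjoint (t : ℝ) (ht : 0 ≤ t) (a b : X) (ha : 0 ≤ a) (hb : 0 ≤ b)
    (hab : a ⊓ b = 0) : (t • a) ⊓ b = 0 := by
  have hT1 : (0:ℝ) < max t 1 := lt_of_lt_of_le one_pos (le_max_right _ _)
  apply le_antisymm
  · have s1 : t • a ≤ (max t 1) • a := smul_mono_scalar (le_max_left t 1) ha
    have s2 : b ≤ (max t 1) • b := by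
      calc b = (1:ℝ) • b := (one_smul _ _).symm
      _ ≤ (max t 1) • b := smul_mono_scalar (le_max_right t 1) hb
    calc (t • a) ⊓ b ≤ ((max t 1) • a) ⊓ ((max t 1) • b) := inf_le_inf s1 s2
    _ = (max t 1) • (a ⊓ b) := (smul_inf_of_pos _ hT1 a b).symm
    _ = 0 := by rw [hab, smul_zero]
  · exact le_inf (smul_nonneg ht ha) hb

lemma smul_smul_disjoint (s t : ℝ) (hs : 0 ≤ s) (ht : 0 ≤ t) (a b : X) (ha : 0 ≤ a) (hb : 0 ≤ b)
    (hab : a ⊓ b = 0) : (s • a) ⊓ (t • b) = 0 := by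
  have h1 : a ⊓ (t • b) = 0 := by
    rw [inf_comm]
    exact smul_disjoint t ht b a hb ha (by rw [inf_comm]; exact hab)
  exact smul_disjoint s hs a (t • b) ha (smul_nonneg ht hb) h1

/-- counting lemma: `n • ((w - n•b)⁺ ⊓ b) ≤ w` -/
lemma counting (w b : X) (hw : 0 ≤ w) (hb : 0 ≤ b) (n : ℕ) :
    (n : ℝ) • (((w - (n:ℝ) • b)⁺) ⊓ b) ≤ w := by
  -- auxiliary: w_k := (w - k•b)⁺ and  w - w_n ≥ n • (w_n ⊓ b)
  have hstep : ∀ k : ℕ, (w - ((k+1:ℕ):ℝ) • b)⁺ = ((w - (k:ℝ) • b)⁺ - b)⁺ := by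
    intro k
    rw [← posPart_sub_of_nonneg _ b hb]
    congr 1
    push_cast
    rw [add_smul, one_smul]
    abel
  have hdec : ∀ k : ℕ, (w - ((k+1:ℕ):ℝ) • b)⁺ ≤ (w - (k:ℝ) • b)⁺ := by
    intro k
    rw [hstep k]
    calc ((w - (k:ℝ) • b)⁺ - b)⁺ ≤ ((w - (k:ℝ) • b)⁺)⁺ :=
      posPart_mono (sub_le_self _ hb)
    _ = (w - (k:ℝ) • b)⁺ := posPart_eq_self.2 (posPart_nonneg _)
  have key : ∀ k : ℕ, (k : ℝ) • ((w - (k:ℝ) • b)⁺ ⊓ b) ≤ w - (w - (k:ℝ) • b)⁺ := by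
    intro k
    induction k with
    | zero => simp [posPart_eq_self.2 hw]
    | succ k ih =>
      have hkk : (w - ((k+1:ℕ):ℝ) • b)⁺ ⊓ b ≤ (w - (k:ℝ) • b)⁺ ⊓ b :=
        inf_le_inf_right _ (hdec k)
      have h2 : (w - (k:ℝ) • b)⁺ - (w - ((k+1:ℕ):ℝ) • b)⁺ = (w - (k:ℝ) • b)⁺ ⊓ b := by
        rw [hstep k]
        have := inf_add_posPart ((w - (k:ℝ) • b)⁺) b
        linear_combination (norm := abel) this.symm
      have h3 : ((k+1:ℕ):ℝ) • ((w - ((k+1:ℕ):ℝ) • b)⁺ ⊓ b)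
          = (k:ℝ) • ((w - ((k+1:ℕ):ℝ) • b)⁺ ⊓ b) + ((w - ((k+1:ℕ):ℝ) • b)⁺ ⊓ b) := by
        push_cast
        rw [add_smul, one_smul]
      rw [h3]
      have h4 : (k:ℝ) • ((w - ((k+1:ℕ):ℝ) • b)⁺ ⊓ b) ≤ w - (w - (k:ℝ) • b)⁺ :=
        le_trans (smul_le_smul_of_nonneg_left hkk (Nat.cast_nonneg k)) ih
      calc (k:ℝ) • ((w - ((k+1:ℕ):ℝ) • b)⁺ ⊓ b) + ((w - ((k+1:ℕ):ℝ) • b)⁺ ⊓ b)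
          ≤ (w - (w - (k:ℝ) • b)⁺) + ((w - (k:ℝ) • b)⁺ ⊓ b) := add_le_add h4 hkk
      _ = w - (w - ((k+1:ℕ):ℝ) • b)⁺ := by rw [← h2]; abel
  calc (n : ℝ) • ((w - (n:ℝ) • b)⁺ ⊓ b) ≤ w - (w - (n:ℝ) • b)⁺ := key n
  _ ≤ w := sub_le_self _ (posPart_nonneg _)


/-- Three pairwise disjoint positive elements each carrying `m`-mass. -/
def HasTriple (m : X →ₗ[ℝ] ℝ) : Prop :=
  ∃ a b c : X, 0 ≤ a ∧ 0 ≤ b ∧ 0 ≤ c ∧ a ⊓ b = 0 ∧ a ⊓ c = 0 ∧ b ⊓ c = 0 ∧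
    m a ≠ 0 ∧ m b ≠ 0 ∧ m c ≠ 0

section Functional

variable (m : X →ₗ[ℝ] ℝ) (hm : ∀ w : X, 0 ≤ w → 0 ≤ m w)

include hm in
lemma m_mono {e₁ e₂ : X} (h : e₁ ≤ e₂) : m e₁ ≤ m e₂ := by
  have h0 : 0 ≤ m (e₂ - e₁) := hm _ (sub_nonneg.2 h)
  rw [map_sub] at h0
  linarith

include hm in
/-- surgery: an almost disjoint triple of massive elements yields a truly disjoint triple -/
lemma sur (a b c : X) (ha : 0 ≤ a) (hb : 0 ≤ b) (hc : 0 ≤ c) (δ : ℝ)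
    (hab : m (a ⊓ b) ≤ δ) (hac : m (a ⊓ c) ≤ δ) (hbc : m (b ⊓ c) ≤ δ)
    (hma : 2*δ < m a) (hmb : 2*δ < m b) (hmc : 2*δ < m c) : HasTriple m := by
  have sub_inf_disj : ∀ u v : X, (u - u ⊓ v) ⊓ (v - u ⊓ v) = 0 := by
    intro u v
    rw [← inf_sub, sub_self]
  set a₁ := a - a ⊓ b with ha₁d
  set b₁ := b - a ⊓ b with hb₁d
  have ha₁ : 0 ≤ a₁ := sub_nonneg.2 inf_le_left
  have hb₁ : 0 ≤ b₁ := sub_nonneg.2 inf_le_right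
  have ha₁a : a₁ ≤ a := sub_le_self _ (le_inf ha hb)
  have hb₁b : b₁ ≤ b := sub_le_self _ (le_inf ha hb)
  have ha₁b₁ : a₁ ⊓ b₁ = 0 := sub_inf_disj a b
  set a₂ := a₁ - a₁ ⊓ c with ha₂d
  set c₁ := c - a₁ ⊓ c with hc₁d
  have h0a₁c : 0 ≤ a₁ ⊓ c := le_inf ha₁ hc
  have ha₂ : 0 ≤ a₂ := sub_nonneg.2 inf_le_left
  have hc₁ : 0 ≤ c₁ := sub_nonneg.2 inf_le_right
  have ha₂a₁ : a₂ ≤ a₁ := sub_le_self _ h0a₁c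
  have hc₁c : c₁ ≤ c := sub_le_self _ h0a₁c
  have ha₂c₁ : a₂ ⊓ c₁ = 0 := sub_inf_disj a₁ c
  have ha₂b₁ : a₂ ⊓ b₁ = 0 :=
    le_antisymm (le_trans (inf_le_inf_right _ ha₂a₁) ha₁b₁.le) (le_inf ha₂ hb₁)
  set b₂ := b₁ - b₁ ⊓ c₁ with hb₂d
  set c₂ := c₁ - b₁ ⊓ c₁ with hc₂d
  have h0b₁c₁ : 0 ≤ b₁ ⊓ c₁ := le_inf hb₁ hc₁
  have hb₂ : 0 ≤ b₂ := sub_nonneg.2 inf_le_left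
  have hc₂ : 0 ≤ c₂ := sub_nonneg.2 inf_le_right
  have hb₂b₁ : b₂ ≤ b₁ := sub_le_self _ h0b₁c₁
  have hc₂c₁ : c₂ ≤ c₁ := sub_le_self _ h0b₁c₁
  have hb₂c₂ : b₂ ⊓ c₂ = 0 := sub_inf_disj b₁ c₁
  have ha₂b₂ : a₂ ⊓ b₂ = 0 :=
    le_antisymm (le_trans (inf_le_inf_left _ hb₂b₁) ha₂b₁.le) (le_inf ha₂ hb₂)
  have ha₂c₂ : a₂ ⊓ c₂ = 0 :=
    le_antisymm (le_trans (inf_le_inf_left _ hc₂c₁) ha₂c₁.le) (le_inf ha₂ hc₂)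
  -- masses
  have ma₁c : m (a₁ ⊓ c) ≤ δ := le_trans (m_mono m hm (inf_le_inf_right c ha₁a)) hac
  have mb₁c₁ : m (b₁ ⊓ c₁) ≤ δ := le_trans (m_mono m hm (inf_le_inf hb₁b hc₁c)) hbc
  have hma₂ : m a₂ ≠ 0 := by
    have : m a₂ = m a₁ - m (a₁ ⊓ c) := by rw [ha₂d, map_sub]
    have h2 : m a₁ = m a - m (a ⊓ b) := by rw [ha₁d, map_sub]
    intro h; rw [this, h2] at h; linarith
  have hmb₂ : m b₂ ≠ 0 := by
    have : m b₂ = m b₁ - m (b₁ ⊓ c₁) := by rw [hb₂d, map_sub]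
    have h2 : m b₁ = m b - m (a ⊓ b) := by rw [hb₁d, map_sub]
    intro h; rw [this, h2] at h; linarith
  have hmc₂ : m c₂ ≠ 0 := by
    have : m c₂ = m c₁ - m (b₁ ⊓ c₁) := by rw [hc₂d, map_sub]
    have h2 : m c₁ = m c - m (a₁ ⊓ c) := by rw [hc₁d, map_sub]
    intro h; rw [this, h2] at h; linarith
  exact ⟨a₂, b₂, c₂, ha₂, hb₂, hc₂, ha₂b₂, ha₂c₂, hb₂c₂, hma₂, hmb₂, hmc₂⟩

end Functional

section Rigid

variable (l m : X →ₗ[ℝ] ℝ) (hm : ∀ w : X, 0 ≤ w → 0 ≤ m w)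
  (hl : ∀ w : X, 0 ≤ w → |l w| ≤ m w)

include hm hl in
lemma l_eq_zero_of_m_eq_zero {e : X} (he : 0 ≤ e) (h : m e = 0) : l e = 0 := by
  have := hl e he
  rw [h] at this
  exact abs_eq_zero.1 (le_antisymm this (abs_nonneg _))

include hm hl in
/-- Rigidity at a one-dimensional "location": on elements exactly disjoint from `b`,
both `m` and `l` are proportional to their values at `a`. -/
lemma rigid (a b : X) (ha : 0 ≤ a) (hb : 0 ≤ b) (hab : a ⊓ b = 0) (hma : 0 < m a)
    (H : ∀ w z : X, 0 ≤ w → 0 ≤ z → w ⊓ b = 0 → z ⊓ b = 0 → w ⊓ z = 0 →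
      m w = 0 ∨ m z = 0)
    (w : X) (hw : 0 ≤ w) (hwb : w ⊓ b = 0) :
    ∃ ρ : ℝ, 0 ≤ ρ ∧ m w = ρ * m a ∧ l w = ρ * l a := by
  classical
  -- the two pos-parts are an admissible pair for H
  have hHpair : ∀ t : ℝ, 0 ≤ t → m ((w - t • a)⁺) = 0 ∨ m ((t • a - w)⁺) = 0 := by
    intro t ht
    apply H
    · exact posPart_nonneg _
    · exact posPart_nonneg _
    · apply le_antisymm _ (le_inf (posPart_nonneg _) hb)
      have hle : (w - t • a)⁺ ≤ w := by
        rw [posPart_def]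
        exact sup_le (sub_le_self _ (smul_nonneg ht ha)) hw
      calc (w - t • a)⁺ ⊓ b ≤ w ⊓ b := inf_le_inf_right b hle
      _ = 0 := hwb
    · apply le_antisymm _ (le_inf (posPart_nonneg _) hb)
      have hle : (t • a - w)⁺ ≤ t • a := by
        rw [posPart_def]
        exact sup_le (sub_le_self _ hw) (smul_nonneg ht ha)
      calc (t • a - w)⁺ ⊓ b ≤ (t • a) ⊓ b := inf_le_inf_right b hle
      _ = 0 := smul_disjoint t ht a b ha hb hab
    · have h1 : (t • a - w)⁺ = (w - t • a)⁻ := by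
        rw [negPart_def, posPart_def, neg_sub]
      rw [h1]
      exact posPart_inf_negPart_eq_zero _
  -- decomposition identities
  have hdecw : ∀ t : ℝ, m w = m (w ⊓ t • a) + m ((w - t • a)⁺) := by
    intro t
    conv_lhs => rw [← inf_add_posPart w (t • a)]
    rw [map_add]
  have hdeca : ∀ t : ℝ, t * m a = m (w ⊓ t • a) + m ((t • a - w)⁺) := by
    intro t
    have := inf_add_posPart (t • a) w
    calc t * m a = m (t • a) := by rw [map_smul, smul_eq_mul]
    _ = m ((t • a) ⊓ w + (t • a - w)⁺) := by rw [this]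
    _ = m (w ⊓ t • a) + m ((t • a - w)⁺) := by rw [map_add, inf_comm]
  have hdecwl : ∀ t : ℝ, l w = l (w ⊓ t • a) + l ((w - t • a)⁺) := by
    intro t
    conv_lhs => rw [← inf_add_posPart w (t • a)]
    rw [map_add]
  have hdecal : ∀ t : ℝ, t * l a = l (w ⊓ t • a) + l ((t • a - w)⁺) := by
    intro t
    have h2 := inf_add_posPart (t • a) w
    calc t * l a = l (t • a) := by rw [map_smul, smul_eq_mul]
    _ = l ((t • a) ⊓ w + (t • a - w)⁺) := by rw [h2]
    _ = l (w ⊓ t • a) + l ((t • a - w)⁺) := by rw [map_add, inf_comm]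
  -- the set of scalars killing w's excess
  set T : Set ℝ := {t : ℝ | 0 ≤ t ∧ m ((w - t • a)⁺) = 0} with hT
  have hTne : T.Nonempty := by
    by_contra hne
    have hall : ∀ t : ℝ, 0 ≤ t → m ((t • a - w)⁺) = 0 := by
      intro t ht
      rcases hHpair t ht with h | h
      · exact absurd ⟨t, ht, h⟩ hne
      · exact h
    have hble : ∀ t : ℝ, 0 ≤ t → t * m a ≤ m w := by
      intro t ht
      rw [hdeca t, hall t ht, add_zero]
      exact m_mono m hm inf_le_left
    have hmw0 : 0 ≤ m w := hm w hw
    have := hble ((m w + 1)/(m a)) (div_nonneg (by linarith) hma.le)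
    rw [div_mul_cancel₀ _ hma.ne'] at this
    linarith
  have hTbdd : BddBelow T := ⟨0, fun t ht => ht.1⟩
  set ρ : ℝ := sInf T with hρ
  have hρ0 : 0 ≤ ρ := le_csInf hTne (fun t ht => ht.1)
  have hgt : ∀ t : ℝ, ρ < t → m ((w - t • a)⁺) = 0 := by
    intro t htρ
    obtain ⟨t', ht'T, ht'lt⟩ := exists_lt_of_csInf_lt hTne htρ
    have hmono : (w - t • a)⁺ ≤ (w - t' • a)⁺ :=
      posPart_mono (sub_le_sub_left (smul_mono_scalar ht'lt.le ha) w)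
    have := m_mono m hm hmono
    have h0 := hm _ (posPart_nonneg (w - t • a))
    rw [ht'T.2] at this
    linarith
  have hlt : ∀ t : ℝ, 0 ≤ t → t < ρ → m ((t • a - w)⁺) = 0 := by
    intro t ht htρ
    have hnotT : t ∉ T := notMem_of_lt_csInf htρ hTbdd
    rcases hHpair t ht with h | h
    · exact absurd ⟨ht, h⟩ hnotT
    · exact h
  -- m w = ρ * m a
  have hmw : m w = ρ * m a := by
    apply le_antisymm
    · apply le_of_forall_pos_le_add
      intro ε hε
      set t : ℝ := ρ + ε / m a with htd
      have htρ : ρ < t := lt_add_of_pos_right _ (by positivity)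
      have h1 : m w = m (w ⊓ t • a) := by
        rw [hdecw t, hgt t htρ, add_zero]
      calc m w = m (w ⊓ t • a) := h1
      _ ≤ m (t • a) := m_mono m hm inf_le_right
      _ = t * m a := by rw [map_smul, smul_eq_mul]
      _ = ρ * m a + ε := by rw [htd]; field_simp
    · apply le_of_forall_pos_le_add
      intro ε hε
      rcases eq_or_lt_of_le hρ0 with hρz | hρpos
      · rw [← hρz, zero_mul]
        linarith [hm w hw]
      · set η : ℝ := min (ρ/2) (ε / m a) with hηd
        have hη0 : 0 < η := lt_min (by linarith) (by positivity)
        have hηρ : η < ρ := lt_of_le_of_lt (min_le_left _ _) (by linarith)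
        set t : ℝ := ρ - η with htd
        have ht0 : 0 ≤ t := by rw [htd]; linarith
        have htρ : t < ρ := by rw [htd]; linarith
        have h1 : t * m a ≤ m w := by
          rw [hdeca t, hlt t ht0 htρ, add_zero]
          exact m_mono m hm inf_le_left
        have h2 : η * m a ≤ ε := by
          calc η * m a ≤ (ε / m a) * m a := by
                apply mul_le_mul_of_nonneg_right (min_le_right _ _) hma.le
          _ = ε := by field_simp
        calc ρ * m a = t * m a + η * m a := by rw [htd]; ring
        _ ≤ m w + ε := add_le_add h1 h2
  -- l w = ρ * l a
  have hlw : l w = ρ * l a := by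
    have hbound : ∀ η : ℝ, 0 < η → η < ρ → |l w - ρ * l a| ≤ η * (2 * m a + |l a|) := by
      intro η hη0 hηρ
      set t : ℝ := ρ + η with htd
      set t' : ℝ := ρ - η with ht'd
      have htρ : ρ < t := by rw [htd]; linarith
      have ht'0 : 0 ≤ t' := by rw [ht'd]; linarith
      have ht'ρ : t' < ρ := by rw [ht'd]; linarith
      have h1 : l w = l (w ⊓ t • a) := by
        rw [hdecwl t, l_eq_zero_of_m_eq_zero l m hm hl (posPart_nonneg _) (hgt t htρ), add_zero]
      have h2 : t' * l a = l (w ⊓ t' • a) := by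
        rw [hdecal t', l_eq_zero_of_m_eq_zero l m hm hl (posPart_nonneg _)
          (hlt t' ht'0 ht'ρ), add_zero]
      set d : X := w ⊓ t • a - w ⊓ t' • a with hdd
      have hd0 : 0 ≤ d := sub_nonneg.2 (inf_le_inf_left w (smul_mono_scalar (by linarith) ha))
      have hdle : d ≤ (2*η) • a := by
        rw [hdd, sub_le_iff_le_add]
        have hsplit : t • a = t' • a + (2*η) • a := by
          rw [← add_smul]; congr 1; rw [htd, ht'd]; ring
        calc w ⊓ t • a = w ⊓ (t' • a + (2*η) • a) := by rw [← hsplit]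
        _ ≤ w ⊓ t' • a + (2*η) • a :=
            inf_add_le_inf_add w _ _ (smul_nonneg (by linarith) ha)
        _ = (2 * η) • a + w ⊓ t' • a := add_comm _ _
      have hld : |l d| ≤ 2 * η * m a := by
        calc |l d| ≤ m d := hl d hd0
        _ ≤ m ((2*η) • a) := m_mono m hm hdle
        _ = 2 * η * m a := by rw [map_smul, smul_eq_mul]
      have h3 : l w - ρ * l a = l d + (t' - ρ) * l a := by
        rw [hdd, map_sub, ← h1, ← h2]; ring
      calc |l w - ρ * l a| = |l d + (t' - ρ) * l a| := by rw [h3]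
      _ ≤ |l d| + |(t' - ρ) * l a| := abs_add_le _ _
      _ = |l d| + η * |l a| := by
          rw [abs_mul]
          congr 1
          rw [ht'd]
          rw [show ρ - η - ρ = -η by ring, abs_neg, abs_of_pos hη0]
      _ ≤ 2 * η * m a + η * |l a| := by linarith
      _ = η * (2 * m a + |l a|) := by ring
    have habs : |l w - ρ * l a| ≤ 0 := by
      apply le_of_forall_pos_le_add
      intro ε hε
      rw [zero_add]
      rcases eq_or_lt_of_le hρ0 with hρz | hρpos
      · -- ρ = 0 : direct estimate
        set t : ℝ := ε / (2 * m a + |l a| + 1) with htd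
        have ht0 : 0 < t := by positivity
        have h1 : l w = l (w ⊓ t • a) := by
          rw [hdecwl t, l_eq_zero_of_m_eq_zero l m hm hl (posPart_nonneg _)
            (hgt t (by rw [← hρz]; exact ht0)), add_zero]
        have h2 : |l (w ⊓ t • a)| ≤ t * m a := by
          calc |l (w ⊓ t • a)| ≤ m (w ⊓ t • a) :=
                hl _ (le_inf hw (smul_nonneg ht0.le ha))
          _ ≤ m (t • a) := m_mono m hm inf_le_right
          _ = t * m a := by rw [map_smul, smul_eq_mul]
        have h3 : t * m a ≤ ε := by
          rw [htd]
          have hD : (0:ℝ) < 2 * m a + |l a| + 1 := by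
            have := abs_nonneg (l a); linarith
          rw [div_mul_eq_mul_div, div_le_iff₀ hD]
          have h4 : ε * (2 * m a + |l a| + 1) = ε * m a + ε * (m a + |l a| + 1) := by ring
          have h5 : 0 ≤ ε * (m a + |l a| + 1) := by positivity
          nlinarith [abs_nonneg (l a)]
        calc |l w - ρ * l a| = |l w| := by rw [← hρz, zero_mul, sub_zero]
        _ = |l (w ⊓ t • a)| := by rw [h1]
        _ ≤ ε := le_trans h2 h3
      · set η : ℝ := min (ρ/2) (ε / (2 * m a + |l a| + 1)) with hηd
        have hη0 : 0 < η := lt_min (by linarith) (by positivity)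
        have hηρ : η < ρ := lt_of_le_of_lt (min_le_left _ _) (by linarith)
        calc |l w - ρ * l a| ≤ η * (2 * m a + |l a|) := hbound η hη0 hηρ
        _ ≤ (ε / (2 * m a + |l a| + 1)) * (2 * m a + |l a|) := by
            apply mul_le_mul_of_nonneg_right (min_le_right _ _)
            have := abs_nonneg (l a)
            linarith [hm a ha]
        _ ≤ ε := by
            have hD : (0:ℝ) < 2 * m a + |l a| + 1 := by
              have := abs_nonneg (l a); have := hm a ha; linarith
            rw [div_mul_eq_mul_div, div_le_iff₀ hD]
            have h4 : ε * (2 * m a + |l a| + 1) = ε * (2 * m a + |l a|) + ε := by ring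
            linarith
    have h0 : l w - ρ * l a = 0 :=
      abs_eq_zero.1 (le_antisymm habs (abs_nonneg _))
    linarith
  exact ⟨ρ, hρ0, hmw, hlw⟩

end Rigid

section Location

variable (m : X →ₗ[ℝ] ℝ) (hm : ∀ w : X, 0 ≤ w → 0 ≤ m w)

include hm in
/-- at a location, `m` turns `⊓` into `min` -/
lemma minlem (b : X) (hb : 0 ≤ b)
    (H : ∀ w z : X, 0 ≤ w → 0 ≤ z → w ⊓ b = 0 → z ⊓ b = 0 → w ⊓ z = 0 →
      m w = 0 ∨ m z = 0)
    (z₁ z₂ : X) (h₁ : 0 ≤ z₁) (h₂ : 0 ≤ z₂) (hz₁ : z₁ ⊓ b = 0) (hz₂ : z₂ ⊓ b = 0) :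
    m (z₁ ⊓ z₂) = min (m z₁) (m z₂) := by
  have hd : (z₁ - z₂)⁺ ⊓ (z₂ - z₁)⁺ = 0 := by
    have h1 : (z₂ - z₁)⁺ = (z₁ - z₂)⁻ := by rw [negPart_def, posPart_def, neg_sub]
    rw [h1]
    exact posPart_inf_negPart_eq_zero _
  have hposle : ∀ p q : X, 0 ≤ p → 0 ≤ q → (p - q)⁺ ≤ p := by
    intro p q hp hq
    rw [posPart_def]
    exact sup_le (sub_le_self _ hq) hp
  have he₁b : (z₁ - z₂)⁺ ⊓ b = 0 :=
    le_antisymm (le_trans (inf_le_inf_right b (hposle z₁ z₂ h₁ h₂)) hz₁.le)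
      (le_inf (posPart_nonneg _) hb)
  have he₂b : (z₂ - z₁)⁺ ⊓ b = 0 :=
    le_antisymm (le_trans (inf_le_inf_right b (hposle z₂ z₁ h₂ h₁)) hz₂.le)
      (le_inf (posPart_nonneg _) hb)
  have hsum₁ : m z₁ = m (z₁ ⊓ z₂) + m ((z₁ - z₂)⁺) := by
    conv_lhs => rw [← inf_add_posPart z₁ z₂]
    rw [map_add]
  have hsum₂ : m z₂ = m (z₂ ⊓ z₁) + m ((z₂ - z₁)⁺) := by
    conv_lhs => rw [← inf_add_posPart z₂ z₁]
    rw [map_add]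
  rcases H _ _ (posPart_nonneg _) (posPart_nonneg _) he₁b he₂b hd with h | h
  · rw [h, add_zero] at hsum₁
    have hle : m z₁ ≤ m z₂ := by rw [hsum₁]; exact m_mono m hm inf_le_right
    rw [min_eq_left hle]
    exact hsum₁.symm
  · rw [h, add_zero] at hsum₂
    have hle : m z₂ ≤ m z₁ := by rw [hsum₂]; exact m_mono m hm inf_le_right
    rw [min_eq_right hle, inf_comm]
    exact hsum₂.symm

include hm in
lemma err_antitone (w e : X) (he : 0 ≤ e) {n n' : ℕ} (h : n ≤ n') :
    m ((w - (n' : ℝ) • e)⁺) ≤ m ((w - (n : ℝ) • e)⁺) :=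
  m_mono m hm (posPart_mono (sub_le_sub_left
    (smul_mono_scalar (by exact_mod_cast h) he) w))

include hm in
lemma claim1 (hS : ¬ HasTriple m) (a b : X) (ha : 0 ≤ a) (hb : 0 ≤ b) (hab : a ⊓ b = 0)
    (hma : 0 < m a) (hmb : 0 < m b) (w : X) (hw : 0 ≤ w) (ε : ℝ) (hε : 0 < ε) :
    ∃ n : ℕ, m ((w - (n : ℝ) • (a + b))⁺) < ε := by
  by_contra hcon
  push_neg at hcon
  set ε₀ : ℝ := min ε (min (m a) (m b)) with hε₀d
  have hε₀ : 0 < ε₀ := lt_min hε (lt_min hma hmb)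
  obtain ⟨n, hn⟩ := exists_nat_gt (max 1 (4 * m w / ε₀))
  have hn1 : (1:ℝ) ≤ n := le_of_lt (lt_of_le_of_lt (le_max_left _ _) hn)
  have hn0 : (0:ℝ) < n := by linarith
  have hn4 : 4 * m w / ε₀ < n := lt_of_le_of_lt (le_max_right _ _) hn
  set h_n : X := (w - (n : ℝ) • (a + b))⁺ with hhd
  set δ : ℝ := m w / n with hδd
  have hmw0 : 0 ≤ m w := hm w hw
  have hδ0 : 0 ≤ δ := div_nonneg hmw0 hn0.le
  -- overlap bound
  have hcount : (n : ℝ) • (h_n ⊓ (a + b)) ≤ w := counting w (a+b) hw (by positivity) n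
  have hoverlap : m (h_n ⊓ (a + b)) ≤ δ := by
    have h1 : (n:ℝ) * m (h_n ⊓ (a+b)) ≤ m w := by
      have := m_mono m hm hcount
      rwa [map_smul, smul_eq_mul] at this
    rw [hδd, le_div_iff₀ hn0, mul_comm]
    exact h1
  have hova : m (h_n ⊓ a) ≤ δ :=
    le_trans (m_mono m hm (inf_le_inf_left h_n (le_add_of_nonneg_right hb))) hoverlap
  have hovb : m (h_n ⊓ b) ≤ δ :=
    le_trans (m_mono m hm (inf_le_inf_left h_n (le_add_of_nonneg_left ha))) hoverlap
  have hovab : m (a ⊓ b) ≤ δ := by rw [hab, map_zero]; exact hδ0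
  -- δ is small
  have hδsmall : 2 * δ < ε₀ := by
    rw [div_lt_iff₀ hε₀] at hn4
    have h1 : 2 * δ = (2 * m w) / n := by rw [hδd]; ring
    rw [h1, div_lt_iff₀ hn0]
    nlinarith
  have h2δε : 2 * δ < m h_n := lt_of_lt_of_le (lt_of_lt_of_le hδsmall (min_le_left _ _)) (hcon n)
  have h2δa : 2 * δ < m a :=
    lt_of_lt_of_le hδsmall (le_trans (min_le_right _ _) (min_le_left _ _))
  have h2δb : 2 * δ < m b :=
    lt_of_lt_of_le hδsmall (le_trans (min_le_right _ _) (min_le_right _ _))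
  exact hS (sur m hm h_n a b (posPart_nonneg _) ha hb δ hova hovb hovab h2δε h2δa h2δb)

end Location

section Formula

variable (l m : X →ₗ[ℝ] ℝ) (hm : ∀ w : X, 0 ≤ w → 0 ≤ m w)
  (hl : ∀ w : X, 0 ≤ w → |l w| ≤ m w)

include hm hl in
lemma formula (a b : X) (ha : 0 ≤ a) (hb : 0 ≤ b) (hab : a ⊓ b = 0)
    (hma : 0 < m a) (hmb : 0 < m b)
    (Hb : ∀ w z : X, 0 ≤ w → 0 ≤ z → w ⊓ b = 0 → z ⊓ b = 0 → w ⊓ z = 0 →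
      m w = 0 ∨ m z = 0)
    (Ha : ∀ w z : X, 0 ≤ w → 0 ≤ z → w ⊓ a = 0 → z ⊓ a = 0 → w ⊓ z = 0 →
      m w = 0 ∨ m z = 0)
    (w : X) (hw : 0 ≤ w) (n : ℕ) :
    |l w - (l a / m a) * m (w ⊓ (n:ℝ) • a)
      - (l b / m b) * m ((w - (n:ℝ) • a)⁺ ⊓ (n:ℝ) • b)|
      ≤ m ((w - (n:ℝ) • (a + b))⁺) := by
  set na : X := (n:ℝ) • a with hnad
  set nb : X := (n:ℝ) • b with hnbd
  have hna : 0 ≤ na := smul_nonneg (Nat.cast_nonneg n) ha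
  have hnb : 0 ≤ nb := smul_nonneg (Nat.cast_nonneg n) hb
  set e₁ : X := w ⊓ na with he₁d
  set e₂ : X := (w - na)⁺ ⊓ nb with he₂d
  set e₃ : X := ((w - na)⁺ - nb)⁺ with he₃d
  have he₃ : e₃ = (w - (n:ℝ) • (a + b))⁺ := by
    rw [he₃d, ← posPart_sub_of_nonneg (w - na) nb hnb, hnad, hnbd, smul_add, sub_sub]
  have hsum : w = e₁ + e₂ + e₃ := by
    have h1 : w = e₁ + (w - na)⁺ := (inf_add_posPart w na).symm
    have h2 : (w - na)⁺ = e₂ + e₃ := (inf_add_posPart ((w - na)⁺) nb).symm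
    rw [h1, h2, add_assoc]
  -- rigidity at location a for e₁
  have he₁0 : 0 ≤ e₁ := le_inf hw hna
  have he₁b : e₁ ⊓ b = 0 := by
    apply le_antisymm _ (le_inf he₁0 hb)
    calc e₁ ⊓ b ≤ na ⊓ b := inf_le_inf_right b inf_le_right
    _ = 0 := smul_disjoint _ (Nat.cast_nonneg n) a b ha hb hab
  obtain ⟨ρ₁, _, hρ₁m, hρ₁l⟩ := rigid l m hm hl a b ha hb hab hma Hb e₁ he₁0 he₁b
  have hle₁ : l e₁ = (l a / m a) * m e₁ := by
    rw [hρ₁m, hρ₁l]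
    field_simp
  -- rigidity at location b for e₂
  have he₂0 : 0 ≤ e₂ := le_inf (posPart_nonneg _) hnb
  have he₂a : e₂ ⊓ a = 0 := by
    apply le_antisymm _ (le_inf he₂0 ha)
    calc e₂ ⊓ a ≤ nb ⊓ a := inf_le_inf_right a inf_le_right
    _ = 0 := smul_disjoint _ (Nat.cast_nonneg n) b a hb ha (by rw [inf_comm]; exact hab)
  obtain ⟨ρ₂, _, hρ₂m, hρ₂l⟩ := rigid l m hm hl b a hb ha (by rw [inf_comm]; exact hab)
    hmb Ha e₂ he₂0 he₂a
  have hle₂ : l e₂ = (l b / m b) * m e₂ := by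
    rw [hρ₂m, hρ₂l]
    field_simp
  have hlw : l w = l e₁ + l e₂ + l e₃ := by rw [hsum]; rw [map_add, map_add]
  have key : l w - (l a / m a) * m e₁ - (l b / m b) * m e₂ = l e₃ := by
    rw [hlw, hle₁, hle₂]; ring
  rw [key, ← he₃]
  exact hl e₃ (posPart_nonneg _)

end Formula

namespace RealAux

noncomputable def F (s t : ℝ) : ℝ :=
  min (max s 0) (max t 0) - min (max (-s) 0) (max (-t) 0)

lemma F_neg (s t : ℝ) : F (-s) (-t) = - F s t := by
  simp only [F, neg_neg]
  ring

lemma F_smul (k s t : ℝ) : F (k*s) (k*t) = k * F s t := by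
  have hnn : ∀ c u v : ℝ, 0 ≤ c → F (c*u) (c*v) = c * F u v := by
    intro c u v hc
    simp only [F]
    rw [show -(c*u) = c * (-u) by ring, show -(c*v) = c * (-v) by ring,
      show (0:ℝ) = c * 0 by ring]
    rw [← mul_max_of_nonneg _ _ hc, ← mul_max_of_nonneg _ _ hc,
      ← mul_max_of_nonneg _ _ hc, ← mul_max_of_nonneg _ _ hc]
    rw [← mul_min_of_nonneg _ _ hc, ← mul_min_of_nonneg _ _ hc]
    ring
  rcases le_total 0 k with hk | hk
  · exact hnn k s t hk
  · have h1 : k * s = -((-k) * s) := by ring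
    have h2 : k * t = -((-k) * t) := by ring
    rw [h1, h2, F_neg, hnn (-k) s t (by linarith)]
    ring

lemma min_lip (p q p' q' : ℝ) : |min p q - min p' q'| ≤ |p - p'| + |q - q'| := by
  rcases le_total p q with h | h <;> rcases le_total p' q' with h' | h' <;>
    simp only [min_eq_left, min_eq_right, h, h'] <;>
    · rw [abs_le]
      constructor <;>
        linarith [le_abs_self (p - p'), neg_abs_le (p - p'),
          le_abs_self (q - q'), neg_abs_le (q - q')]

lemma F_lip (s t s' t' : ℝ) : |F s t - F s' t'| ≤ 2 * (|s - s'| + |t - t'|) := by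
  have h1 : |min (max s 0) (max t 0) - min (max s' 0) (max t' 0)|
      ≤ |s - s'| + |t - t'| := by
    refine le_trans (min_lip _ _ _ _) ?_
    have := abs_max_sub_max_le_abs s s' 0
    have := abs_max_sub_max_le_abs t t' 0
    linarith
  have h2 : |min (max (-s) 0) (max (-t) 0) - min (max (-s') 0) (max (-t') 0)|
      ≤ |s - s'| + |t - t'| := by
    refine le_trans (min_lip _ _ _ _) ?_
    have ha := abs_max_sub_max_le_abs (-s) (-s') 0
    have hb := abs_max_sub_max_le_abs (-t) (-t') 0
    rw [show -s - -s' = -(s - s') by ring, abs_neg] at ha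
    rw [show -t - -t' = -(t - t') by ring, abs_neg] at hb
    linarith
  calc |F s t - F s' t'|
      = |(min (max s 0) (max t 0) - min (max s' 0) (max t' 0))
        - (min (max (-s) 0) (max (-t) 0) - min (max (-s') 0) (max (-t') 0))| := by
        simp only [F]; ring_nf
  _ ≤ _ := abs_sub _ _ |>.trans (by linarith)

lemma F_self (s : ℝ) : F s s = s := by
  simp only [F, min_self]
  rcases le_total 0 s with h | h
  · rw [max_eq_left h, max_eq_right (by linarith : -s ≤ 0)]
    ring
  · rw [max_eq_right h, max_eq_left (by linarith : (0:ℝ) ≤ -s)]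
    ring

lemma F_comm (s t : ℝ) : F s t = F t s := by
  simp [F, min_comm]

lemma F_oppsign (s t : ℝ) (h : s * t ≤ 0) : F s t = 0 := by
  have key : ∀ u v : ℝ, 0 ≤ u → v ≤ 0 → F u v = 0 := by
    intro u v hu hv
    simp only [F]
    rw [max_eq_right hv, min_eq_right (le_max_right u 0),
      max_eq_right (neg_nonpos.2 hu), min_eq_left (le_max_right (-v) 0), sub_zero]
  rcases le_total 0 s with hs | hs <;> rcases le_total 0 t with ht | ht
  · have h0 : s * t = 0 := le_antisymm h (mul_nonneg hs ht)
    rcases mul_eq_zero.1 h0 with h0 | h0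
    · rw [h0, F_comm]; exact key t 0 ht le_rfl
    · rw [h0]; exact key s 0 hs le_rfl
  · exact key s t hs ht
  · rw [F_comm]; exact key t s ht hs
  · have h0 : s * t = 0 := le_antisymm h (by nlinarith)
    rcases mul_eq_zero.1 h0 with h0 | h0
    · rw [h0]; exact key 0 t le_rfl ht
    · rw [h0, F_comm]; exact key 0 s le_rfl hs

lemma rep (A B : ℝ) (hA : 0 ≤ A) (hB : 0 ≤ B) (h : min A B = 0) :
    A = max (A - B) 0 ∧ B = max (-(A - B)) 0 := by
  rcases le_total A B with hle | hle
  · have hA0 : A = 0 := by rw [min_eq_left hle] at h; exact h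
    constructor
    · rw [hA0, max_eq_right (by linarith : (0:ℝ) - B ≤ 0)]
    · rw [hA0, show -((0:ℝ) - B) = B by ring, max_eq_left hB]
  · have hB0 : B = 0 := by rw [min_eq_right hle] at h; exact h
    constructor
    · rw [hB0, sub_zero, max_eq_left hA]
    · rw [hB0, max_eq_right (by linarith : -(A - 0) ≤ 0)]

lemma F_bound (s t : ℝ) : |F s t| ≤ 2 * (|s| + |t|) := by
  have h0 : F 0 0 = 0 := by simp [F]
  simpa [h0] using F_lip s t 0 0

lemma rkey (α β aa aa' cc cc' e₁ e₂ : ℝ)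
    (h1 : |α*aa + β*cc| ≤ e₁) (h2 : |α*aa' + β*cc'| ≤ e₂) :
    |α * F aa aa' + β * F cc cc'| ≤ 2*(e₁ + e₂) := by
  have he₁ : 0 ≤ e₁ := le_trans (abs_nonneg _) h1
  have he₂ : 0 ≤ e₂ := le_trans (abs_nonneg _) h2
  by_cases hβ : β = 0
  · subst hβ
    simp only [zero_mul, add_zero] at h1 h2 ⊢
    calc |α * F aa aa'| = |α| * |F aa aa'| := abs_mul _ _
    _ ≤ |α| * (2 * (|aa| + |aa'|)) :=
        mul_le_mul_of_nonneg_left (F_bound aa aa') (abs_nonneg _)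
    _ = 2 * (|α * aa| + |α * aa'|) := by rw [abs_mul, abs_mul]; ring
    _ ≤ 2 * (e₁ + e₂) := by linarith
  · have hβpos : 0 < |β| := abs_pos.2 hβ
    set k : ℝ := -α/β with hkd
    have hβk : β * k = -α := by
      rw [hkd]
      field_simp
    have hc : cc - k * aa = (α*aa + β*cc)/β := by
      rw [eq_div_iff hβ]
      linear_combination (-aa) * hβk
    have hc' : cc' - k * aa' = (α*aa' + β*cc')/β := by
      rw [eq_div_iff hβ]
      linear_combination (-aa') * hβk
    have hkey : α * F aa aa' + β * F cc cc' = β * (F cc cc' - F (k*aa) (k*aa')) := by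
      rw [F_smul k aa aa']
      linear_combination (F aa aa') * hβk
    rw [hkey, abs_mul]
    have hF : |F cc cc' - F (k*aa) (k*aa')| ≤ 2 * (|cc - k*aa| + |cc' - k*aa'|) :=
      F_lip cc cc' (k*aa) (k*aa')
    have hcc : |cc - k*aa| ≤ e₁ / |β| := by
      rw [hc, abs_div]
      exact div_le_div_of_nonneg_right h1 hβpos.le |>.trans le_rfl
    have hcc' : |cc' - k*aa'| ≤ e₂ / |β| := by
      rw [hc', abs_div]
      exact div_le_div_of_nonneg_right h2 hβpos.le |>.trans le_rfl
    calc |β| * |F cc cc' - F (k*aa) (k*aa')|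
        ≤ |β| * (2 * (e₁/|β| + e₂/|β|)) := by
          apply mul_le_mul_of_nonneg_left _ (abs_nonneg _)
          linarith
    _ = 2 * (e₁ + e₂) := by
        field_simp

end RealAux

end GrothendieckKer



namespace GrothendieckKer

open RealAux

lemma posPart_inf_dist (p q : X) : (p ⊓ q)⁺ = p⁺ ⊓ q⁺ := by
  letI : DistribLattice X := AddCommGroup.toDistribLattice X
  rw [posPart_def, posPart_def, posPart_def]
  exact sup_inf_right ..

lemma lx_eq (l : X →ₗ[ℝ] ℝ) (x : X) : l x = l x⁺ - l x⁻ := by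
  conv_lhs => rw [← posPart_sub_negPart x]
  rw [map_sub]

lemma hard (l m : X →ₗ[ℝ] ℝ) (hm : ∀ w : X, 0 ≤ w → 0 ≤ m w)
    (hl : ∀ w : X, 0 ≤ w → |l w| ≤ m w) (hS : ¬ HasTriple m)
    (x y : X) (hx : l x = 0) (hy : l y = 0) :
    l (x⁺ ⊓ y⁺) = l (x⁻ ⊓ y⁻) := by
  have hu0 : (0:X) ≤ x⁺ ⊓ y⁺ := le_inf (posPart_nonneg x) (posPart_nonneg y)
  have hv0 : (0:X) ≤ x⁻ ⊓ y⁻ := le_inf (negPart_nonneg x) (negPart_nonneg y)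
  have hxpm : l x⁺ = l x⁻ := by have := lx_eq l x; rw [hx] at this; linarith
  have hypm : l y⁺ = l y⁻ := by have := lx_eq l y; rw [hy] at this; linarith
  by_cases hpair : ∃ a b : X, 0 ≤ a ∧ 0 ≤ b ∧ a ⊓ b = 0 ∧ m a ≠ 0 ∧ m b ≠ 0
  case neg =>
    -- width ≤ 1 case
    have Hp : ∀ w z : X, 0 ≤ w → 0 ≤ z → w ⊓ z = 0 → m w = 0 ∨ m z = 0 := by
      intro w z hw hz hwz
      by_contra hcon
      push_neg at hcon
      exact hpair ⟨w, z, hw, hz, hwz, hcon.1, hcon.2⟩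
    by_cases hex : ∃ a : X, 0 ≤ a ∧ m a ≠ 0
    case neg =>
      push_neg at hex
      rw [l_eq_zero_of_m_eq_zero l m hm hl hu0 (hex _ hu0),
        l_eq_zero_of_m_eq_zero l m hm hl hv0 (hex _ hv0)]
    case pos =>
      obtain ⟨a, ha, hma0⟩ := hex
      have hma : 0 < m a := lt_of_le_of_ne (hm a ha) (Ne.symm hma0)
      have hH0 : ∀ w z : X, 0 ≤ w → 0 ≤ z → w ⊓ (0:X) = 0 → z ⊓ (0:X) = 0 →
          w ⊓ z = 0 → m w = 0 ∨ m z = 0 :=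
        fun w z hw hz _ _ hwz => Hp w z hw hz hwz
      have R : ∀ w : X, 0 ≤ w → ∃ ρ : ℝ, 0 ≤ ρ ∧ m w = ρ * m a ∧ l w = ρ * l a :=
        fun w hw => rigid l m hm hl a 0 ha le_rfl (inf_eq_right.2 ha) hma hH0 w hw
          (inf_eq_right.2 hw)
      by_cases hla : l a = 0
      · obtain ⟨ρu, _, _, hlu⟩ := R _ hu0
        obtain ⟨ρv, _, _, hlv⟩ := R _ hv0
        rw [hlu, hlv, hla, mul_zero, mul_zero]
      · obtain ⟨ρ₁, _, hm₁, hl₁⟩ := R x⁺ (posPart_nonneg x)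
        obtain ⟨ρ₂, _, hm₂, hl₂⟩ := R x⁻ (negPart_nonneg x)
        have hρ12 : ρ₁ = ρ₂ := by
          rw [hl₁, hl₂] at hxpm
          exact mul_right_cancel₀ hla hxpm
        have hmxx : m x⁺ = m x⁻ := by rw [hm₁, hm₂, hρ12]
        have hx0 : m x⁺ = 0 ∧ m x⁻ = 0 := by
          rcases Hp x⁺ x⁻ (posPart_nonneg x) (negPart_nonneg x)
            (posPart_inf_negPart_eq_zero x) with h0 | h0
          · exact ⟨h0, by rw [← hmxx]; exact h0⟩
          · exact ⟨by rw [hmxx]; exact h0, h0⟩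
        have hmu : m (x⁺ ⊓ y⁺) = 0 :=
          le_antisymm (le_trans (m_mono m hm inf_le_left) hx0.1.le) (hm _ hu0)
        have hmv : m (x⁻ ⊓ y⁻) = 0 :=
          le_antisymm (le_trans (m_mono m hm inf_le_left) hx0.2.le) (hm _ hv0)
        rw [l_eq_zero_of_m_eq_zero l m hm hl hu0 hmu,
          l_eq_zero_of_m_eq_zero l m hm hl hv0 hmv]
  case pos =>
    obtain ⟨a, b, ha, hb, hab, hma0, hmb0⟩ := hpair
    have hma : 0 < m a := lt_of_le_of_ne (hm a ha) (Ne.symm hma0)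
    have hmb : 0 < m b := lt_of_le_of_ne (hm b hb) (Ne.symm hmb0)
    have Hb : ∀ w z : X, 0 ≤ w → 0 ≤ z → w ⊓ b = 0 → z ⊓ b = 0 → w ⊓ z = 0 →
        m w = 0 ∨ m z = 0 := by
      intro w z hw hz hwb hzb hwz
      by_contra hcon
      push_neg at hcon
      exact hS ⟨w, z, b, hw, hz, hb, hwz, hwb, hzb, hcon.1, hcon.2, hmb0⟩
    have Ha : ∀ w z : X, 0 ≤ w → 0 ≤ z → w ⊓ a = 0 → z ⊓ a = 0 → w ⊓ z = 0 →
        m w = 0 ∨ m z = 0 := by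
      intro w z hw hz hwa hza hwz
      by_contra hcon
      push_neg at hcon
      exact hS ⟨w, z, a, hw, hz, ha, hwz, hwa, hza, hcon.1, hcon.2, hma0⟩
    set α : ℝ := l a / m a with hαd
    set β : ℝ := l b / m b with hβd
    have key : ∀ ε : ℝ, 0 < ε → |l (x⁺ ⊓ y⁺) - l (x⁻ ⊓ y⁻)| ≤ 10 * ε := by
      intro ε hε
      obtain ⟨n₁, hn₁⟩ := claim1 m hm hS a b ha hb hab hma hmb x⁺ (posPart_nonneg x) ε hε
      obtain ⟨n₂, hn₂⟩ := claim1 m hm hS a b ha hb hab hma hmb x⁻ (negPart_nonneg x) ε hε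
      obtain ⟨n₃, hn₃⟩ := claim1 m hm hS a b ha hb hab hma hmb y⁺ (posPart_nonneg y) ε hε
      obtain ⟨n₄, hn₄⟩ := claim1 m hm hS a b ha hb hab hma hmb y⁻ (negPart_nonneg y) ε hε
      obtain ⟨n₅, hn₅⟩ := claim1 m hm hS a b ha hb hab hma hmb (x⁺ ⊓ y⁺) hu0 ε hε
      obtain ⟨n₆, hn₆⟩ := claim1 m hm hS a b ha hb hab hma hmb (x⁻ ⊓ y⁻) hv0 ε hε
      set N : ℕ := max n₁ (max n₂ (max n₃ (max n₄ (max n₅ n₆)))) with hNd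
      have hab' : (0:X) ≤ a + b := add_nonneg ha hb
      have hE : ∀ (w : X) (n : ℕ), n ≤ N →
          m ((w - (n:ℝ) • (a+b))⁺) < ε → m ((w - (N:ℝ) • (a+b))⁺) < ε :=
        fun w n hn h => lt_of_le_of_lt (err_antitone m hm w (a+b) hab' hn) h
      have hE₁ := hE x⁺ n₁ (by omega) hn₁
      have hE₂ := hE x⁻ n₂ (by omega) hn₂
      have hE₃ := hE y⁺ n₃ (by omega) hn₃
      have hE₄ := hE y⁻ n₄ (by omega) hn₄
      have hE₅ := hE (x⁺ ⊓ y⁺) n₅ (by omega) hn₅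
      have hE₆ := hE (x⁻ ⊓ y⁻) n₆ (by omega) hn₆
      set Na : X := (N:ℝ) • a with hNad
      set Nb : X := (N:ℝ) • b with hNbd
      have hNa : 0 ≤ Na := smul_nonneg (Nat.cast_nonneg N) ha
      have hNb : 0 ≤ Nb := smul_nonneg (Nat.cast_nonneg N) hb
      have hNab : Na ⊓ b = 0 := smul_disjoint _ (Nat.cast_nonneg N) a b ha hb hab
      have hNba : Nb ⊓ a = 0 :=
        smul_disjoint _ (Nat.cast_nonneg N) b a hb ha (by rw [inf_comm]; exact hab)
      -- A-quantities
      have hzb : ∀ z : X, 0 ≤ z → (z ⊓ Na) ⊓ b = 0 := by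
        intro z hz
        apply le_antisymm _ (le_inf (le_inf hz hNa) hb)
        calc (z ⊓ Na) ⊓ b ≤ Na ⊓ b := inf_le_inf_right b inf_le_right
        _ = 0 := hNab
      have hAmin : ∀ z₁ z₂ : X, 0 ≤ z₁ → 0 ≤ z₂ →
          m ((z₁ ⊓ z₂) ⊓ Na) = min (m (z₁ ⊓ Na)) (m (z₂ ⊓ Na)) := by
        intro z₁ z₂ h₁ h₂
        rw [inf_inf_distrib_right z₁ z₂ Na]
        exact minlem m hm b hb Hb _ _ (le_inf h₁ hNa) (le_inf h₂ hNa) (hzb z₁ h₁) (hzb z₂ h₂)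
      -- B-quantities
      have hzbB : ∀ z : X, ((z - Na)⁺ ⊓ Nb) ⊓ a = 0 := by
        intro z
        apply le_antisymm _ (le_inf (le_inf (posPart_nonneg _) hNb) ha)
        calc ((z - Na)⁺ ⊓ Nb) ⊓ a ≤ Nb ⊓ a := inf_le_inf_right a inf_le_right
        _ = 0 := hNba
      have hBdist : ∀ z₁ z₂ : X,
          ((z₁ ⊓ z₂ - Na)⁺ ⊓ Nb) = ((z₁ - Na)⁺ ⊓ Nb) ⊓ ((z₂ - Na)⁺ ⊓ Nb) := by
        intro z₁ z₂
        rw [inf_sub z₁ z₂ Na, posPart_inf_dist, inf_inf_distrib_right]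
      have hBmin : ∀ z₁ z₂ : X,
          m ((z₁ ⊓ z₂ - Na)⁺ ⊓ Nb) = min (m ((z₁ - Na)⁺ ⊓ Nb)) (m ((z₂ - Na)⁺ ⊓ Nb)) := by
        intro z₁ z₂
        rw [hBdist]
        exact minlem m hm a ha Ha _ _ (le_inf (posPart_nonneg _) hNb)
          (le_inf (posPart_nonneg _) hNb) (hzbB z₁) (hzbB z₂)
      -- complementarity
      have hA0x : min (m (x⁺ ⊓ Na)) (m (x⁻ ⊓ Na)) = 0 := by
        rw [← hAmin x⁺ x⁻ (posPart_nonneg x) (negPart_nonneg x),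
          posPart_inf_negPart_eq_zero, inf_eq_left.2 hNa, map_zero]
      have hA0y : min (m (y⁺ ⊓ Na)) (m (y⁻ ⊓ Na)) = 0 := by
        rw [← hAmin y⁺ y⁻ (posPart_nonneg y) (negPart_nonneg y),
          posPart_inf_negPart_eq_zero, inf_eq_left.2 hNa, map_zero]
      have hzb0 : ((0:X) - Na)⁺ ⊓ Nb = 0 := by
        rw [zero_sub, posPart_eq_zero.2 (neg_nonpos.2 hNa), inf_eq_left.2 hNb]
      have hB0x : min (m ((x⁺ - Na)⁺ ⊓ Nb)) (m ((x⁻ - Na)⁺ ⊓ Nb)) = 0 := by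
        rw [← hBmin x⁺ x⁻, posPart_inf_negPart_eq_zero, hzb0, map_zero]
      have hB0y : min (m ((y⁺ - Na)⁺ ⊓ Nb)) (m ((y⁻ - Na)⁺ ⊓ Nb)) = 0 := by
        rw [← hBmin y⁺ y⁻, posPart_inf_negPart_eq_zero, hzb0, map_zero]
      -- formula instances
      have hF := fun (w : X) (hw : 0 ≤ w) =>
        formula l m hm hl a b ha hb hab hma hmb Hb Ha w hw N
      have hF₁ := hF x⁺ (posPart_nonneg x)
      have hF₂ := hF x⁻ (negPart_nonneg x)
      have hF₃ := hF y⁺ (posPart_nonneg y)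
      have hF₄ := hF y⁻ (negPart_nonneg y)
      have hF₅ := hF (x⁺ ⊓ y⁺) hu0
      have hF₆ := hF (x⁻ ⊓ y⁻) hv0
      rw [← hNad, ← hNbd] at hF₁ hF₂ hF₃ hF₄ hF₅ hF₆
      rw [← hαd, ← hβd] at hF₁ hF₂ hF₃ hF₄ hF₅ hF₆
      set A1 : ℝ := m (x⁺ ⊓ Na); set A2 : ℝ := m (x⁻ ⊓ Na)
      set A3 : ℝ := m (y⁺ ⊓ Na); set A4 : ℝ := m (y⁻ ⊓ Na)
      set B1 : ℝ := m ((x⁺ - Na)⁺ ⊓ Nb); set B2 : ℝ := m ((x⁻ - Na)⁺ ⊓ Nb)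
      set B3 : ℝ := m ((y⁺ - Na)⁺ ⊓ Nb); set B4 : ℝ := m ((y⁻ - Na)⁺ ⊓ Nb)
      -- kernel inequalities
      have habs₁ : |l x⁺ - α * A1 - β * B1| < ε := lt_of_le_of_lt hF₁ hE₁
      have habs₂ : |l x⁻ - α * A2 - β * B2| < ε := lt_of_le_of_lt hF₂ hE₂
      have habs₃ : |l y⁺ - α * A3 - β * B3| < ε := lt_of_le_of_lt hF₃ hE₃
      have habs₄ : |l y⁻ - α * A4 - β * B4| < ε := lt_of_le_of_lt hF₄ hE₄
      have hk1 : |α * (A1 - A2) + β * (B1 - B2)| ≤ 2 * ε := by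
        have hid : α * (A1 - A2) + β * (B1 - B2)
            = (l x⁻ - α * A2 - β * B2) - (l x⁺ - α * A1 - β * B1) := by
          rw [← hxpm]; ring
        rw [hid]
        calc |(l x⁻ - α * A2 - β * B2) - (l x⁺ - α * A1 - β * B1)|
            ≤ |l x⁻ - α * A2 - β * B2| + |l x⁺ - α * A1 - β * B1| := abs_sub _ _
        _ ≤ 2 * ε := by linarith
      have hk2 : |α * (A3 - A4) + β * (B3 - B4)| ≤ 2 * ε := by
        have hid : α * (A3 - A4) + β * (B3 - B4)
            = (l y⁻ - α * A4 - β * B4) - (l y⁺ - α * A3 - β * B3) := by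
          rw [← hypm]; ring
        rw [hid]
        calc |(l y⁻ - α * A4 - β * B4) - (l y⁺ - α * A3 - β * B3)|
            ≤ |l y⁻ - α * A4 - β * B4| + |l y⁺ - α * A3 - β * B3| := abs_sub _ _
        _ ≤ 2 * ε := by linarith
      -- representation through F
      obtain ⟨rA1, rA2⟩ := rep A1 A2 (hm _ (le_inf (posPart_nonneg x) hNa))
        (hm _ (le_inf (negPart_nonneg x) hNa)) hA0x
      obtain ⟨rA3, rA4⟩ := rep A3 A4 (hm _ (le_inf (posPart_nonneg y) hNa))
        (hm _ (le_inf (negPart_nonneg y) hNa)) hA0y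
      obtain ⟨rB1, rB2⟩ := rep B1 B2 (hm _ (le_inf (posPart_nonneg _) hNb))
        (hm _ (le_inf (posPart_nonneg _) hNb)) hB0x
      obtain ⟨rB3, rB4⟩ := rep B3 B4 (hm _ (le_inf (posPart_nonneg _) hNb))
        (hm _ (le_inf (posPart_nonneg _) hNb)) hB0y
      have hAu : m ((x⁺ ⊓ y⁺) ⊓ Na) = min A1 A3 :=
        hAmin x⁺ y⁺ (posPart_nonneg x) (posPart_nonneg y)
      have hAv : m ((x⁻ ⊓ y⁻) ⊓ Na) = min A2 A4 :=
        hAmin x⁻ y⁻ (negPart_nonneg x) (negPart_nonneg y)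
      have hBu : m (((x⁺ ⊓ y⁺) - Na)⁺ ⊓ Nb) = min B1 B3 := hBmin x⁺ y⁺
      have hBv : m (((x⁻ ⊓ y⁻) - Na)⁺ ⊓ Nb) = min B2 B4 := hBmin x⁻ y⁻
      rw [hAu, hBu] at hF₅
      rw [hAv, hBv] at hF₆
      have hFA : min A1 A3 - min A2 A4 = F (A1 - A2) (A3 - A4) := by
        rw [F]
        rw [← rA1, ← rA2, ← rA3, ← rA4]
      have hFB : min B1 B3 - min B2 B4 = F (B1 - B2) (B3 - B4) := by
        rw [F]
        rw [← rB1, ← rB2, ← rB3, ← rB4]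
      have hrkey := rkey α β (A1 - A2) (A3 - A4) (B1 - B2) (B3 - B4) (2*ε) (2*ε) hk1 hk2
      -- assemble
      have hid2 : l (x⁺ ⊓ y⁺) - l (x⁻ ⊓ y⁻)
          = (α * F (A1 - A2) (A3 - A4) + β * F (B1 - B2) (B3 - B4))
            + (l (x⁺ ⊓ y⁺) - α * min A1 A3 - β * min B1 B3)
            - (l (x⁻ ⊓ y⁻) - α * min A2 A4 - β * min B2 B4) := by
        rw [← hFA, ← hFB]; ring
      rw [hid2]
      have h5 : |l (x⁺ ⊓ y⁺) - α * min A1 A3 - β * min B1 B3| < ε := lt_of_le_of_lt hF₅ hE₅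
      have h6 : |l (x⁻ ⊓ y⁻) - α * min A2 A4 - β * min B2 B4| < ε := lt_of_le_of_lt hF₆ hE₆
      calc |(α * F (A1 - A2) (A3 - A4) + β * F (B1 - B2) (B3 - B4))
            + (l (x⁺ ⊓ y⁺) - α * min A1 A3 - β * min B1 B3)
            - (l (x⁻ ⊓ y⁻) - α * min A2 A4 - β * min B2 B4)|
          ≤ |(α * F (A1 - A2) (A3 - A4) + β * F (B1 - B2) (B3 - B4))
            + (l (x⁺ ⊓ y⁺) - α * min A1 A3 - β * min B1 B3)|
            + |l (x⁻ ⊓ y⁻) - α * min A2 A4 - β * min B2 B4| := abs_sub _ _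
      _ ≤ |α * F (A1 - A2) (A3 - A4) + β * F (B1 - B2) (B3 - B4)|
            + |l (x⁺ ⊓ y⁺) - α * min A1 A3 - β * min B1 B3|
            + |l (x⁻ ⊓ y⁻) - α * min A2 A4 - β * min B2 B4| := by
          linarith [abs_add_le (α * F (A1 - A2) (A3 - A4) + β * F (B1 - B2) (B3 - B4))
            (l (x⁺ ⊓ y⁺) - α * min A1 A3 - β * min B1 B3)]
      _ ≤ 2 * (2*ε + 2*ε) + ε + ε := by linarith
      _ = 10 * ε := by ring
    have habs : |l (x⁺ ⊓ y⁺) - l (x⁻ ⊓ y⁻)| ≤ 0 := by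
      apply le_of_forall_pos_le_add
      intro δ hδ
      rw [zero_add]
      calc |l (x⁺ ⊓ y⁺) - l (x⁻ ⊓ y⁻)| ≤ 10 * (δ/10) := key (δ/10) (by linarith)
      _ = δ := by ring
    have h0 : l (x⁺ ⊓ y⁺) - l (x⁻ ⊓ y⁻) = 0 :=
      abs_eq_zero.1 (le_antisymm habs (abs_nonneg _))
    linarith

end GrothendieckKer

namespace GrothendieckKer

open RealAux

lemma zid (x y : X) : x ⊔ y ⊔ 0 + x ⊓ y ⊓ 0 = x + y - x⁺ ⊓ y⁺ + x⁻ ⊓ y⁻ := by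
  have h1 : x ⊔ y ⊔ 0 = x⁺ ⊔ y⁺ := by
    rw [posPart_def, posPart_def]
    exact sup_sup_distrib_right x y 0
  have h2 : x ⊓ y ⊓ 0 = -(x⁻ ⊔ y⁻) := by
    simp only [negPart_def, neg_sup, neg_neg, neg_zero]
    exact inf_inf_distrib_right x y 0
  rw [h1, h2]
  have h3 := inf_add_sup (x⁺) (y⁺)
  have h4 := inf_add_sup (x⁻) (y⁻)
  have h5 := posPart_sub_negPart x
  have h6 := posPart_sub_negPart y
  linear_combination (norm := abel) h3 - h4 + h5 + h6

lemma inf_zero_of_le (A B C : X) (hA : 0 ≤ A) (h12 : A ⊓ B = 0) (h13 : A ⊓ C = 0)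
    (hB : 0 ≤ B) (hC : 0 ≤ C) : A ⊓ (B + C) = 0 := by
  apply le_antisymm _ (le_inf hA (add_nonneg hB hC))
  calc A ⊓ (B + C) ≤ A ⊓ B + A ⊓ C := inf_add_le_inf_add_inf A B C hA hB hC
  _ = 0 := by rw [h12, h13, add_zero]

lemma inf_add_absorb (A B C : X) (hA : 0 ≤ A) (hB : 0 ≤ B) (hC : 0 ≤ C)
    (hAC : A ⊓ C = 0) : A ⊓ (B + C) = A ⊓ B := by
  apply le_antisymm
  · calc A ⊓ (B + C) ≤ A ⊓ B + A ⊓ C := inf_add_le_inf_add_inf A B C hA hB hC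
    _ = A ⊓ B := by rw [hAC, add_zero]
  · exact inf_le_inf_left A (le_add_of_nonneg_right hC)

lemma smul_min (r s : ℝ) (hr : 0 ≤ r) (hs : 0 ≤ s) (w : X) (hw : 0 ≤ w) :
    (r • w) ⊓ (s • w) = min r s • w := by
  rcases le_total r s with h | h
  · rw [min_eq_left h]
    exact inf_eq_left.2 (smul_mono_scalar h hw)
  · rw [min_eq_right h]
    exact inf_eq_right.2 (smul_mono_scalar h hw)

lemma tripleInf (e₁ e₂ e₃ : X) (h₁ : 0 ≤ e₁) (h₂ : 0 ≤ e₂) (h₃ : 0 ≤ e₃)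
    (d12 : e₁ ⊓ e₂ = 0) (d13 : e₁ ⊓ e₃ = 0) (d23 : e₂ ⊓ e₃ = 0)
    (r₁ r₂ r₃ s₁ s₂ s₃ : ℝ) (hr₁ : 0 ≤ r₁) (hr₂ : 0 ≤ r₂) (hr₃ : 0 ≤ r₃)
    (hs₁ : 0 ≤ s₁) (hs₂ : 0 ≤ s₂) (hs₃ : 0 ≤ s₃) :
    (r₁ • e₁ + r₂ • e₂ + r₃ • e₃) ⊓ (s₁ • e₁ + s₂ • e₂ + s₃ • e₃)
      = min r₁ s₁ • e₁ + min r₂ s₂ • e₂ + min r₃ s₃ • e₃ := by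
  set A₁ : X := r₁ • e₁; set A₂ : X := r₂ • e₂; set A₃ : X := r₃ • e₃
  set B₁ : X := s₁ • e₁; set B₂ : X := s₂ • e₂; set B₃ : X := s₃ • e₃
  have hA₁ : 0 ≤ A₁ := smul_nonneg hr₁ h₁
  have hA₂ : 0 ≤ A₂ := smul_nonneg hr₂ h₂
  have hA₃ : 0 ≤ A₃ := smul_nonneg hr₃ h₃
  have hB₁ : 0 ≤ B₁ := smul_nonneg hs₁ h₁
  have hB₂ : 0 ≤ B₂ := smul_nonneg hs₂ h₂
  have hB₃ : 0 ≤ B₃ := smul_nonneg hs₃ h₃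
  have d21 : e₂ ⊓ e₁ = 0 := by rw [inf_comm]; exact d12
  have d31 : e₃ ⊓ e₁ = 0 := by rw [inf_comm]; exact d13
  have d32 : e₃ ⊓ e₂ = 0 := by rw [inf_comm]; exact d23
  have dA₁B₂ : A₁ ⊓ B₂ = 0 := smul_smul_disjoint _ _ hr₁ hs₂ _ _ h₁ h₂ d12
  have dA₁B₃ : A₁ ⊓ B₃ = 0 := smul_smul_disjoint _ _ hr₁ hs₃ _ _ h₁ h₃ d13
  have dA₂B₁ : A₂ ⊓ B₁ = 0 := smul_smul_disjoint _ _ hr₂ hs₁ _ _ h₂ h₁ d21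
  have dA₂B₃ : A₂ ⊓ B₃ = 0 := smul_smul_disjoint _ _ hr₂ hs₃ _ _ h₂ h₃ d23
  have dA₃B₁ : A₃ ⊓ B₁ = 0 := smul_smul_disjoint _ _ hr₃ hs₁ _ _ h₃ h₁ d31
  have dA₃B₂ : A₃ ⊓ B₂ = 0 := smul_smul_disjoint _ _ hr₃ hs₂ _ _ h₃ h₂ d32
  have dA₁A₂ : A₁ ⊓ A₂ = 0 := smul_smul_disjoint _ _ hr₁ hr₂ _ _ h₁ h₂ d12
  have dA₁A₃ : A₁ ⊓ A₃ = 0 := smul_smul_disjoint _ _ hr₁ hr₃ _ _ h₁ h₃ d13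
  have dA₂A₃ : A₂ ⊓ A₃ = 0 := smul_smul_disjoint _ _ hr₂ hr₃ _ _ h₂ h₃ d23
  set x' : X := A₁ + A₂ + A₃ with hx'd
  set y' : X := B₁ + B₂ + B₃ with hy'd
  have hy'0 : 0 ≤ y' := add_nonneg (add_nonneg hB₁ hB₂) hB₃
  have hsplit : x' ⊓ y' = A₁ ⊓ y' + A₂ ⊓ y' + A₃ ⊓ y' := by
    rw [hx'd, add_assoc, disjoint_inf_add_inf A₁ (A₂ + A₃) y' hA₁
      (add_nonneg hA₂ hA₃) hy'0 (inf_zero_of_le A₁ A₂ A₃ hA₁ dA₁A₂ dA₁A₃ hA₂ hA₃),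
      disjoint_inf_add_inf A₂ A₃ y' hA₂ hA₃ hy'0 dA₂A₃, add_assoc]
  have hA₁y : A₁ ⊓ y' = min r₁ s₁ • e₁ := by
    rw [hy'd, add_assoc, inf_add_absorb A₁ B₁ (B₂ + B₃) hA₁ hB₁ (add_nonneg hB₂ hB₃)
      (inf_zero_of_le A₁ B₂ B₃ hA₁ dA₁B₂ dA₁B₃ hB₂ hB₃)]
    exact smul_min r₁ s₁ hr₁ hs₁ e₁ h₁
  have hA₂y : A₂ ⊓ y' = min r₂ s₂ • e₂ := by
    have hre : B₁ + B₂ + B₃ = B₂ + (B₁ + B₃) := by abel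
    rw [hy'd, hre, inf_add_absorb A₂ B₂ (B₁ + B₃) hA₂ hB₂ (add_nonneg hB₁ hB₃)
      (inf_zero_of_le A₂ B₁ B₃ hA₂ dA₂B₁ dA₂B₃ hB₁ hB₃)]
    exact smul_min r₂ s₂ hr₂ hs₂ e₂ h₂
  have hA₃y : A₃ ⊓ y' = min r₃ s₃ • e₃ := by
    have hre : B₁ + B₂ + B₃ = B₃ + (B₁ + B₂) := by abel
    rw [hy'd, hre, inf_add_absorb A₃ B₃ (B₁ + B₂) hA₃ hB₃ (add_nonneg hB₁ hB₂)
      (inf_zero_of_le A₃ B₁ B₂ hA₃ dA₃B₁ dA₃B₂ hB₁ hB₂)]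
    exact smul_min r₃ s₃ hr₃ hs₃ e₃ h₃
  rw [hsplit, hA₁y, hA₂y, hA₃y]

lemma triplePos (e₁ e₂ e₃ : X) (h₁ : 0 ≤ e₁) (h₂ : 0 ≤ e₂) (h₃ : 0 ≤ e₃)
    (d12 : e₁ ⊓ e₂ = 0) (d13 : e₁ ⊓ e₃ = 0) (d23 : e₂ ⊓ e₃ = 0)
    (c₁ c₂ c₃ : ℝ) :
    (c₁ • e₁ + c₂ • e₂ + c₃ • e₃)⁺
      = max c₁ 0 • e₁ + max c₂ 0 • e₂ + max c₃ 0 • e₃ := by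
  set P : X := max c₁ 0 • e₁ + max c₂ 0 • e₂ + max c₃ 0 • e₃ with hPd
  set Q : X := max (-c₁) 0 • e₁ + max (-c₂) 0 • e₂ + max (-c₃) 0 • e₃ with hQd
  have hcoef : ∀ c : ℝ, c = max c 0 - max (-c) 0 := by
    intro c
    rcases le_total 0 c with h | h
    · rw [max_eq_left h, max_eq_right (by linarith : -c ≤ 0)]; ring
    · rw [max_eq_right h, max_eq_left (by linarith : (0:ℝ) ≤ -c)]; ring
  have hx : c₁ • e₁ + c₂ • e₂ + c₃ • e₃ = P - Q := by
    rw [hPd, hQd]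
    rw [show c₁ • e₁ = (max c₁ 0 - max (-c₁) 0) • e₁ by rw [← hcoef],
      show c₂ • e₂ = (max c₂ 0 - max (-c₂) 0) • e₂ by rw [← hcoef],
      show c₃ • e₃ = (max c₃ 0 - max (-c₃) 0) • e₃ by rw [← hcoef],
      sub_smul, sub_smul, sub_smul]
    abel
  have hmm : ∀ c : ℝ, min (max c 0) (max (-c) 0) = 0 := by
    intro c
    rcases le_total 0 c with h | h
    · rw [max_eq_right (by linarith : -c ≤ 0), min_eq_right (le_max_right c 0)]
    · rw [max_eq_right h, min_eq_left (le_max_right (-c) 0)]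
  have hPQ : P ⊓ Q = 0 := by
    rw [hPd, hQd, tripleInf e₁ e₂ e₃ h₁ h₂ h₃ d12 d13 d23 _ _ _ _ _ _
      (le_max_right c₁ 0) (le_max_right c₂ 0) (le_max_right c₃ 0)
      (le_max_right (-c₁) 0) (le_max_right (-c₂) 0) (le_max_right (-c₃) 0),
      hmm c₁, hmm c₂, hmm c₃, zero_smul, zero_smul, zero_smul, add_zero, add_zero]
  have hkey := inf_add_posPart P Q
  rw [hPQ, zero_add] at hkey
  rw [hx, hkey]

lemma easy (l m : X →ₗ[ℝ] ℝ)
    (hget : ∀ a : X, 0 ≤ a → m a ≠ 0 → ∃ u : X, 0 ≤ u ∧ u ≤ a ∧ l u ≠ 0)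
    (ht : HasTriple m) (hG : IsGrothendieckSubspace (LinearMap.ker l)) : False := by
  obtain ⟨a, b, c, ha, hb, hc, hab, hac, hbc, hma, hmb, hmc⟩ := ht
  obtain ⟨u₁, h₁0, h₁a, hL₁⟩ := hget a ha hma
  obtain ⟨u₂, h₂0, h₂b, hL₂⟩ := hget b hb hmb
  obtain ⟨u₃, h₃0, h₃c, hL₃⟩ := hget c hc hmc
  have d12 : u₁ ⊓ u₂ = 0 :=
    le_antisymm (le_trans (inf_le_inf h₁a h₂b) hab.le) (le_inf h₁0 h₂0)
  have d13 : u₁ ⊓ u₃ = 0 :=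
    le_antisymm (le_trans (inf_le_inf h₁a h₃c) hac.le) (le_inf h₁0 h₃0)
  have d23 : u₂ ⊓ u₃ = 0 :=
    le_antisymm (le_trans (inf_le_inf h₂b h₃c) hbc.le) (le_inf h₂0 h₃0)
  set L₁ : ℝ := l u₁ with hL₁d
  set L₂ : ℝ := l u₂ with hL₂d
  set L₃ : ℝ := l u₃ with hL₃d
  set c₁ : ℝ := 1/L₁ with hc₁d
  set c₂ : ℝ := 1/L₂ with hc₂d
  set c₃ : ℝ := -2/L₃ with hc₃d
  set d₁ : ℝ := 1/L₁ with hd₁d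
  set d₂ : ℝ := -2/L₂ with hd₂d
  set d₃ : ℝ := 1/L₃ with hd₃d
  set x : X := c₁ • u₁ + c₂ • u₂ + c₃ • u₃ with hxd
  set y : X := d₁ • u₁ + d₂ • u₂ + d₃ • u₃ with hyd
  have hlx : l x = 0 := by
    rw [hxd]
    simp only [map_add, map_smul, smul_eq_mul, ← hL₁d, ← hL₂d, ← hL₃d]
    rw [hc₁d, hc₂d, hc₃d, one_div_mul_cancel hL₁, one_div_mul_cancel hL₂,
      div_mul_cancel₀ _ hL₃]
    norm_num
  have hly : l y = 0 := by
    rw [hyd]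
    simp only [map_add, map_smul, smul_eq_mul, ← hL₁d, ← hL₂d, ← hL₃d]
    rw [hd₁d, hd₂d, hd₃d, one_div_mul_cancel hL₁, one_div_mul_cancel hL₃,
      div_mul_cancel₀ _ hL₂]
    norm_num
  -- positive and negative parts
  have hxpos : x⁺ = max c₁ 0 • u₁ + max c₂ 0 • u₂ + max c₃ 0 • u₃ := by
    rw [hxd]; exact triplePos u₁ u₂ u₃ h₁0 h₂0 h₃0 d12 d13 d23 c₁ c₂ c₃
  have hypos : y⁺ = max d₁ 0 • u₁ + max d₂ 0 • u₂ + max d₃ 0 • u₃ := by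
    rw [hyd]; exact triplePos u₁ u₂ u₃ h₁0 h₂0 h₃0 d12 d13 d23 d₁ d₂ d₃
  have hnegx : -x = (-c₁) • u₁ + (-c₂) • u₂ + (-c₃) • u₃ := by
    rw [hxd]; simp only [neg_add, neg_smul]
  have hnegy : -y = (-d₁) • u₁ + (-d₂) • u₂ + (-d₃) • u₃ := by
    rw [hyd]; simp only [neg_add, neg_smul]
  have hxneg : x⁻ = max (-c₁) 0 • u₁ + max (-c₂) 0 • u₂ + max (-c₃) 0 • u₃ := by
    rw [show x⁻ = (-x)⁺ by rw [negPart_def, posPart_def], hnegx]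
    exact triplePos u₁ u₂ u₃ h₁0 h₂0 h₃0 d12 d13 d23 _ _ _
  have hyneg : y⁻ = max (-d₁) 0 • u₁ + max (-d₂) 0 • u₂ + max (-d₃) 0 • u₃ := by
    rw [show y⁻ = (-y)⁺ by rw [negPart_def, posPart_def], hnegy]
    exact triplePos u₁ u₂ u₃ h₁0 h₂0 h₃0 d12 d13 d23 _ _ _
  have hu' : x⁺ ⊓ y⁺ = min (max c₁ 0) (max d₁ 0) • u₁ + min (max c₂ 0) (max d₂ 0) • u₂
      + min (max c₃ 0) (max d₃ 0) • u₃ := by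
    rw [hxpos, hypos]
    exact tripleInf u₁ u₂ u₃ h₁0 h₂0 h₃0 d12 d13 d23 _ _ _ _ _ _
      (le_max_right _ _) (le_max_right _ _) (le_max_right _ _)
      (le_max_right _ _) (le_max_right _ _) (le_max_right _ _)
  have hv' : x⁻ ⊓ y⁻ = min (max (-c₁) 0) (max (-d₁) 0) • u₁
      + min (max (-c₂) 0) (max (-d₂) 0) • u₂
      + min (max (-c₃) 0) (max (-d₃) 0) • u₃ := by
    rw [hxneg, hyneg]
    exact tripleInf u₁ u₂ u₃ h₁0 h₂0 h₃0 d12 d13 d23 _ _ _ _ _ _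
      (le_max_right _ _) (le_max_right _ _) (le_max_right _ _)
      (le_max_right _ _) (le_max_right _ _) (le_max_right _ _)
  have hluv : l (x⁺ ⊓ y⁺) - l (x⁻ ⊓ y⁻)
      = F c₁ d₁ * L₁ + F c₂ d₂ * L₂ + F c₃ d₃ * L₃ := by
    rw [hu', hv']
    simp only [map_add, map_smul, smul_eq_mul, ← hL₁d, ← hL₂d, ← hL₃d, F]
    ring
  have hF₁ : F c₁ d₁ = 1/L₁ := by rw [hc₁d, hd₁d]; exact F_self _
  have hF₂ : F c₂ d₂ = 0 := by
    apply F_oppsign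
    rw [hc₂d, hd₂d]
    have h1 : 1/L₂ * (-2/L₂) = -(2 * (1/L₂)^2) := by ring
    rw [h1]
    have := sq_nonneg (1/L₂)
    linarith
  have hF₃ : F c₃ d₃ = 0 := by
    apply F_oppsign
    rw [hc₃d, hd₃d]
    have h1 : -2/L₃ * (1/L₃) = -(2 * (1/L₃)^2) := by ring
    rw [h1]
    have := sq_nonneg (1/L₃)
    linarith
  have hone : l (x⁺ ⊓ y⁺) - l (x⁻ ⊓ y⁻) = 1 := by
    rw [hluv, hF₁, hF₂, hF₃, zero_mul, zero_mul, add_zero, add_zero,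
      one_div_mul_cancel hL₁]
  have hz := hG x (LinearMap.mem_ker.2 hlx) y (LinearMap.mem_ker.2 hly)
  rw [LinearMap.mem_ker, zid x y] at hz
  simp only [map_add, map_sub] at hz
  rw [hlx, hly] at hz
  linarith

lemma getu (l p : X →ₗ[ℝ] ℝ) (hp : IsPosPartOf l p) (a : X) (ha : 0 ≤ a)
    (hma : (p + (p - l)) a ≠ 0) : ∃ u : X, 0 ≤ u ∧ u ≤ a ∧ l u ≠ 0 := by
  obtain ⟨hppos, hqpos, hsup⟩ := hp
  have hpa : 0 ≤ p a := hppos a ha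
  have hqa : 0 ≤ p a - l a := by
    have := hqpos a ha
    simpa using this
  have hm0 : p a + (p a - l a) ≠ 0 := by
    simpa [LinearMap.add_apply, LinearMap.sub_apply] using hma
  set S : Set ℝ := {r : ℝ | ∃ y : X, 0 ≤ y ∧ y ≤ a ∧ l y = r} with hSd
  have hS0 : (0:ℝ) ∈ S := ⟨0, le_rfl, ha, map_zero l⟩
  have hSne : S.Nonempty := ⟨0, hS0⟩
  have hsupa : p a = sSup S := hsup a ha
  have hcase : 0 < p a ∨ 0 < p a - l a := by
    by_contra hcon
    push_neg at hcon
    exact hm0 (by linarith [hcon.1, hcon.2])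
  rcases hcase with hcase | hcase
  · obtain ⟨r, hrS, hr⟩ := exists_lt_of_lt_csSup hSne
      (show p a / 2 < sSup S by rw [← hsupa]; linarith)
    obtain ⟨u, hu0, hua, hlu⟩ := hrS
    refine ⟨u, hu0, hua, ?_⟩
    rw [hlu]
    intro h0
    rw [h0] at hr
    linarith
  · obtain ⟨r, hrS, hr⟩ := exists_lt_of_lt_csSup hSne
      (show l a < sSup S by rw [← hsupa]; linarith)
    obtain ⟨u, hu0, hua, hlu⟩ := hrS
    refine ⟨a - u, sub_nonneg.2 hua, sub_le_self a hu0, ?_⟩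
    rw [map_sub, hlu]
    intro h0
    have : l a = r := by linarith
    linarith
  
lemma master (l m : X →ₗ[ℝ] ℝ) (hm : ∀ w : X, 0 ≤ w → 0 ≤ m w)
    (hl : ∀ w : X, 0 ≤ w → |l w| ≤ m w)
    (hget : ∀ a : X, 0 ≤ a → m a ≠ 0 → ∃ u : X, 0 ≤ u ∧ u ≤ a ∧ l u ≠ 0) :
    IsGrothendieckSubspace (LinearMap.ker l) ↔ ¬ HasTriple m := by
  constructor
  · intro hG ht
    exact easy l m hget ht hG
  · intro hS x hxk y hyk
    rw [LinearMap.mem_ker] at hxk hyk ⊢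
    have hmain := hard l m hm hl hS x y hxk hyk
    rw [zid x y]
    simp only [map_add, map_sub]
    rw [hxk, hyk, hmain]
    ring

end GrothendieckKer

theorem ker_grothendieck_iff_ker_modulus_grothendieck (l p : X →ₗ[ℝ] ℝ)
    (hp : IsPosPartOf l p) :
    IsGrothendieckSubspace (LinearMap.ker l) ↔
      IsGrothendieckSubspace (LinearMap.ker (p + (p - l))) := by
  obtain ⟨hppos, hqpos, hsup⟩ := hp
  set m : X →ₗ[ℝ] ℝ := p + (p - l) with hmd
  have hmapp : ∀ w : X, m w = p w + (p w - l w) := by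
    intro w
    rw [hmd]
    simp [LinearMap.add_apply, LinearMap.sub_apply]
  have hmpos : ∀ w : X, 0 ≤ w → 0 ≤ m w := by
    intro w hw
    have h1 := hppos w hw
    have h2 := hqpos w hw
    simp only [LinearMap.sub_apply] at h2
    rw [hmapp w]
    linarith
  have hlabs : ∀ w : X, 0 ≤ w → |l w| ≤ m w := by
    intro w hw
    have h1 := hppos w hw
    have h2 := hqpos w hw
    simp only [LinearMap.sub_apply] at h2
    rw [abs_le, hmapp w]
    constructor <;> linarith
  have hmabs : ∀ w : X, 0 ≤ w → |m w| ≤ m w := fun w hw => by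
    rw [abs_of_nonneg (hmpos w hw)]
  have hget1 : ∀ a : X, 0 ≤ a → m a ≠ 0 → ∃ u : X, 0 ≤ u ∧ u ≤ a ∧ l u ≠ 0 :=
    fun a ha h => GrothendieckKer.getu l p ⟨hppos, hqpos, hsup⟩ a ha h
  have hget2 : ∀ a : X, 0 ≤ a → m a ≠ 0 → ∃ u : X, 0 ≤ u ∧ u ≤ a ∧ m u ≠ 0 :=
    fun a ha h => ⟨a, ha, le_rfl, h⟩
  rw [GrothendieckKer.master l m hmpos hlabs hget1,
    GrothendieckKer.master m m hmpos hmabs hget2]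
end
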